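/- arXiv:1904.01656 — 5 statements merged into one kernel-verified Lean document; each statement's English description precedes it below -/
import Mathlib

section
/- For all integers n and k with 1 ≤ k ≤ n/2, the difference C(n,k) - C(n,k-1) equals the number of k-element subsets Y of {1,...,n} such that for every m with 1 ≤ m ≤ n, the cardinality of Y ∩ {1,...,m} is at most m/2. -/
open scoped Classical

open Finset

open scoped symmDiff

private def cnt (Y : Finset ℕ) (m : ℕ) : ℕ := (Y ∩ Finset.Icc 1 m).card

private lemma cnt_le (Y : Finset ℕ) (m : ℕ) : cnt Y m ≤ m := by
  have h : Y ∩ Finset.Icc 1 m ⊆ Finset.Icc 1 m := inter_subset_right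
  calc cnt Y m ≤ (Finset.Icc 1 m).card := card_le_card h
    _ = m := by simp

private lemma cnt_le_card (Y : Finset ℕ) (m : ℕ) : cnt Y m ≤ Y.card :=
  card_le_card inter_subset_left

private lemma cnt_zero (Y : Finset ℕ) : cnt Y 0 = 0 := by
  simp [cnt]

private lemma cnt_succ_le (Y : Finset ℕ) (m : ℕ) : cnt Y (m + 1) ≤ cnt Y m + 1 := by
  have h : Y ∩ Finset.Icc 1 (m + 1) ⊆ insert (m + 1) (Y ∩ Finset.Icc 1 m) := by
    intro x hx
    simp only [mem_inter, Finset.mem_Icc] at hx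
    simp only [mem_insert, mem_inter, Finset.mem_Icc]
    rcases Nat.lt_or_ge x (m + 1) with h' | h'
    · exact Or.inr ⟨hx.1, hx.2.1, by omega⟩
    · exact Or.inl (by omega)
  calc cnt Y (m + 1) ≤ (insert (m + 1) (Y ∩ Finset.Icc 1 m)).card := card_le_card h
    _ ≤ cnt Y m + 1 := card_insert_le _ _

private lemma cnt_full {Y : Finset ℕ} {n m : ℕ} (hY : Y ⊆ Finset.Icc 1 n) (hnm : n ≤ m) :
    cnt Y m = Y.card := by
  unfold cnt
  congr 1
  apply inter_eq_left.2
  exact hY.trans (Finset.Icc_subset_Icc_right hnm)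

/-- first index where the path goes above the diagonal -/
private lemma first_bad (Y : Finset ℕ) {M : ℕ} (hs : M < 2 * cnt Y M)
    (hmin : ∀ j < M, ¬ (j < 2 * cnt Y j)) :
    2 * cnt Y M = M + 1 ∧ 1 ≤ M ∧ ∀ j < M, 2 * cnt Y j ≤ j := by
  have hmin' : ∀ j < M, 2 * cnt Y j ≤ j := fun j hj => by have := hmin j hj; omega
  have h1 : 1 ≤ M := by
    by_contra hc
    have h0 : M = 0 := by omega
    rw [h0, cnt_zero] at hs; omega
  obtain ⟨j, hj⟩ : ∃ j, M = j + 1 := ⟨M - 1, by omega⟩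
  have h2 := hmin' j (by omega)
  have h3 := cnt_succ_le Y j
  subst hj
  exact ⟨by omega, by omega, hmin'⟩

/-- first index where the path goes below the diagonal -/
private lemma first_low (Y : Finset ℕ) {M : ℕ} (hs : 2 * cnt Y M < M)
    (hmin : ∀ j < M, ¬ (2 * cnt Y j < j)) :
    2 * cnt Y M + 1 = M ∧ 1 ≤ M ∧ ∀ j < M, j ≤ 2 * cnt Y j := by
  have hmin' : ∀ j < M, j ≤ 2 * cnt Y j := fun j hj => by have := hmin j hj; omega
  have h1 : 1 ≤ M := by omega
  obtain ⟨j, hj⟩ : ∃ j, M = j + 1 := ⟨M - 1, by omega⟩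
  have h2 := hmin' j (by omega)
  have h3 := cnt_succ_le Y j
  have h4 : cnt Y j ≤ cnt Y (j+1) := by
    apply card_le_card
    exact inter_subset_inter Subset.rfl (Finset.Icc_subset_Icc_right (Nat.le_succ j))
  subst hj
  exact ⟨by omega, by omega, hmin'⟩

private lemma cnt_symmDiff (Y : Finset ℕ) {j m : ℕ} (hjm : j ≤ m) :
    cnt (Y ∆ Finset.Icc 1 m) j = j - cnt Y j := by
  have h1 : (Y ∆ Finset.Icc 1 m) ∩ Finset.Icc 1 j = Finset.Icc 1 j \ Y := by
    ext x
    simp only [mem_inter, Finset.mem_symmDiff, Finset.mem_Icc, mem_sdiff]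
    constructor
    · rintro ⟨h, hx1, hx2⟩
      refine ⟨⟨hx1, hx2⟩, ?_⟩
      rcases h with ⟨hY, hI⟩ | ⟨hI, hY⟩
      · exact absurd ⟨hx1, by omega⟩ hI
      · exact hY
    · rintro ⟨⟨hx1, hx2⟩, hY⟩
      exact ⟨Or.inr ⟨⟨hx1, by omega⟩, hY⟩, hx1, hx2⟩
  have h2 : (Finset.Icc 1 j \ Y).card + (Finset.Icc 1 j ∩ Y).card = (Finset.Icc 1 j).card :=
    Finset.card_sdiff_add_card_inter _ _
  have h3 : (Finset.Icc 1 j).card = j := by simp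
  have h4 : (Finset.Icc 1 j ∩ Y).card = cnt Y j := by rw [cnt, inter_comm]
  have h5 : cnt Y j ≤ j := cnt_le Y j
  simp only [cnt] at h4 ⊢
  rw [h1]
  omega

private lemma card_symmDiff_Icc (Y : Finset ℕ) (m : ℕ) :
    (Y ∆ Finset.Icc 1 m).card + 2 * cnt Y m = Y.card + m := by
  have hd : Disjoint (Y \ Finset.Icc 1 m) (Finset.Icc 1 m \ Y) :=
    disjoint_sdiff_sdiff
  have he : Y ∆ Finset.Icc 1 m = (Y \ Finset.Icc 1 m) ∪ (Finset.Icc 1 m \ Y) := rfl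
  have h1 : (Y \ Finset.Icc 1 m).card + (Y ∩ Finset.Icc 1 m).card = Y.card :=
    Finset.card_sdiff_add_card_inter _ _
  have h2 : (Finset.Icc 1 m \ Y).card + (Finset.Icc 1 m ∩ Y).card = (Finset.Icc 1 m).card :=
    Finset.card_sdiff_add_card_inter _ _
  have h3 : (Finset.Icc 1 m).card = m := by simp
  have h4 : (Finset.Icc 1 m ∩ Y).card = cnt Y m := by rw [cnt, inter_comm]
  rw [he, card_union_of_disjoint hd]
  unfold cnt at *
  omega

private lemma symmDiff_subset_Icc {Y : Finset ℕ} {n m : ℕ} (hY : Y ⊆ Finset.Icc 1 n)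
    (hm : m ≤ n) : Y ∆ Finset.Icc 1 m ⊆ Finset.Icc 1 n := by
  intro x hx
  rw [Finset.mem_symmDiff] at hx
  rcases hx with ⟨h1, _⟩ | ⟨h1, _⟩
  · exact hY h1
  · exact Finset.Icc_subset_Icc_right hm h1

private def badIdx (Y : Finset ℕ) (h : ∃ m, m < 2 * cnt Y m) : ℕ :=
  @Nat.find (fun m => m < 2 * cnt Y m) (fun _ => Nat.decLt _ _) h

private lemma badIdx_spec (Y : Finset ℕ) (h : ∃ m, m < 2 * cnt Y m) :
    badIdx Y h < 2 * cnt Y (badIdx Y h) :=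
  @Nat.find_spec (fun m => m < 2 * cnt Y m) (fun _ => Nat.decLt _ _) h

private lemma badIdx_min (Y : Finset ℕ) (h : ∃ m, m < 2 * cnt Y m) {j : ℕ}
    (hj : j < badIdx Y h) : ¬ (j < 2 * cnt Y j) :=
  @Nat.find_min (fun m => m < 2 * cnt Y m) (fun _ => Nat.decLt _ _) h j hj

private lemma badIdx_eq_iff (Y : Finset ℕ) (h : ∃ m, m < 2 * cnt Y m) {M : ℕ} :
    badIdx Y h = M ↔ (M < 2 * cnt Y M ∧ ∀ j < M, ¬ (j < 2 * cnt Y j)) :=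
  @Nat.find_eq_iff M (fun m => m < 2 * cnt Y m) (fun _ => Nat.decLt _ _) h

private def lowIdx (Z : Finset ℕ) (h : ∃ m, 2 * cnt Z m < m) : ℕ :=
  @Nat.find (fun m => 2 * cnt Z m < m) (fun _ => Nat.decLt _ _) h

private lemma lowIdx_spec (Z : Finset ℕ) (h : ∃ m, 2 * cnt Z m < m) :
    2 * cnt Z (lowIdx Z h) < lowIdx Z h :=
  @Nat.find_spec (fun m => 2 * cnt Z m < m) (fun _ => Nat.decLt _ _) h

private lemma lowIdx_min (Z : Finset ℕ) (h : ∃ m, 2 * cnt Z m < m) {j : ℕ}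
    (hj : j < lowIdx Z h) : ¬ (2 * cnt Z j < j) :=
  @Nat.find_min (fun m => 2 * cnt Z m < m) (fun _ => Nat.decLt _ _) h j hj

private lemma lowIdx_le (Z : Finset ℕ) (h : ∃ m, 2 * cnt Z m < m) {m : ℕ}
    (hm : 2 * cnt Z m < m) : lowIdx Z h ≤ m :=
  @Nat.find_le m (fun m => 2 * cnt Z m < m) (fun _ => Nat.decLt _ _) h hm

private lemma lowIdx_eq_iff (Z : Finset ℕ) (h : ∃ m, 2 * cnt Z m < m) {M : ℕ} :
    lowIdx Z h = M ↔ (2 * cnt Z M < M ∧ ∀ j < M, ¬ (2 * cnt Z j < j)) :=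
  @Nat.find_eq_iff M (fun m => 2 * cnt Z m < m) (fun _ => Nat.decLt _ _) h

private noncomputable def phi (Y : Finset ℕ) : Finset ℕ :=
  if h : ∃ m, m < 2 * cnt Y m then Y ∆ Finset.Icc 1 (badIdx Y h) else Y

private noncomputable def psi (Z : Finset ℕ) : Finset ℕ :=
  if h : ∃ m, 2 * cnt Z m < m then Z ∆ Finset.Icc 1 (lowIdx Z h) else Z

private lemma phi_spec {Y : Finset ℕ} (h : ∃ m, m < 2 * cnt Y m) :
    phi Y = Y ∆ Finset.Icc 1 (badIdx Y h) := dif_pos h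

private lemma psi_spec {Z : Finset ℕ} (h : ∃ m, 2 * cnt Z m < m) :
    psi Z = Z ∆ Finset.Icc 1 (lowIdx Z h) := dif_pos h

private lemma low_exists {n k : ℕ} (hk : 1 ≤ k) (hn : 2 * k ≤ n) {Z : Finset ℕ}
    (hZ : Z ⊆ Finset.Icc 1 n) (hcard : Z.card = k - 1) : ∃ m, 2 * cnt Z m < m := by
  refine ⟨n, ?_⟩
  rw [cnt_full hZ le_rfl, hcard]
  omega

private lemma bad_card (n k : ℕ) (hk : 1 ≤ k) (hn : 2 * k ≤ n) :
    (((Finset.Icc 1 n).powersetCard k).filter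
      (fun Y => ∃ m, m < 2 * cnt Y m)).card = Nat.choose n (k - 1) := by
  have hIcc : (Finset.Icc 1 n).card = n := by simp
  have htarget : ((Finset.Icc 1 n).powersetCard (k-1)).card = Nat.choose n (k - 1) := by
    rw [card_powersetCard, hIcc]
  rw [← htarget]
  refine Finset.card_nbij' phi psi ?_ ?_ ?_ ?_
  · -- phi maps bad k-sets into (k-1)-sets
    intro Y hY
    obtain ⟨hmem, hbad⟩ := Finset.mem_filter.1 hY
    obtain ⟨hsub, hcard⟩ := Finset.mem_powersetCard.1 hmem
    obtain ⟨hM1, hM2, hM3⟩ := first_bad Y (badIdx_spec Y hbad) (fun j hj => badIdx_min Y hbad hj)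
    have hcle : cnt Y (badIdx Y hbad) ≤ Y.card := cnt_le_card Y (badIdx Y hbad)
    have hMn : (badIdx Y hbad) ≤ n := by omega
    rw [phi_spec hbad]
    refine Finset.mem_powersetCard.2 ⟨symmDiff_subset_Icc hsub hMn, ?_⟩
    have := card_symmDiff_Icc Y (badIdx Y hbad)
    omega
  · -- psi maps (k-1)-sets into bad k-sets
    intro Z hZ
    obtain ⟨hsub, hcard⟩ := Finset.mem_powersetCard.1 hZ
    have hlow := low_exists hk hn hsub hcard
    obtain ⟨hM1, hM2, hM3⟩ := first_low Z (lowIdx_spec Z hlow) (fun j hj => lowIdx_min Z hlow hj)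
    have hcle : cnt Z (lowIdx Z hlow) ≤ Z.card := cnt_le_card Z (lowIdx Z hlow)
    have hMn : (lowIdx Z hlow) ≤ n := by
      apply lowIdx_le
      rw [cnt_full hsub le_rfl, hcard]
      omega
    rw [psi_spec hlow]
    refine Finset.mem_filter.2 ⟨?_, ?_⟩
    · refine Finset.mem_powersetCard.2 ⟨symmDiff_subset_Icc hsub hMn, ?_⟩
      have := card_symmDiff_Icc Z (lowIdx Z hlow)
      omega
    · refine ⟨(lowIdx Z hlow), ?_⟩
      have h1 : cnt (Z ∆ Finset.Icc 1 (lowIdx Z hlow)) (lowIdx Z hlow) = (lowIdx Z hlow) - cnt Z (lowIdx Z hlow) := cnt_symmDiff Z le_rfl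
      have h2 : cnt Z (lowIdx Z hlow) ≤ (lowIdx Z hlow) := cnt_le Z (lowIdx Z hlow)
      omega
  · -- psi (phi Y) = Y
    intro Y hY
    obtain ⟨hmem, hbad⟩ := Finset.mem_filter.1 hY
    obtain ⟨hM1, hM2, hM3⟩ := first_bad Y (badIdx_spec Y hbad) (fun j hj => badIdx_min Y hbad hj)
    rw [phi_spec hbad]
    have hlow' : ∃ m, 2 * cnt (Y ∆ Finset.Icc 1 (badIdx Y hbad)) m < m := by
      refine ⟨(badIdx Y hbad), ?_⟩
      have h1 : cnt (Y ∆ Finset.Icc 1 (badIdx Y hbad)) (badIdx Y hbad) = (badIdx Y hbad) - cnt Y (badIdx Y hbad) := cnt_symmDiff Y le_rfl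
      have h2 : cnt Y (badIdx Y hbad) ≤ (badIdx Y hbad) := cnt_le Y (badIdx Y hbad)
      omega
    rw [psi_spec hlow']
    have hfind : lowIdx (Y ∆ Finset.Icc 1 (badIdx Y hbad)) hlow' = (badIdx Y hbad) := by
      rw [lowIdx_eq_iff]
      constructor
      · have h1 : cnt (Y ∆ Finset.Icc 1 (badIdx Y hbad)) (badIdx Y hbad) = (badIdx Y hbad) - cnt Y (badIdx Y hbad) := cnt_symmDiff Y le_rfl
        have h2 : cnt Y (badIdx Y hbad) ≤ (badIdx Y hbad) := cnt_le Y (badIdx Y hbad)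
        omega
      · intro j hj
        have h1 : cnt (Y ∆ Finset.Icc 1 (badIdx Y hbad)) j = j - cnt Y j := cnt_symmDiff Y (le_of_lt hj)
        have h2 := hM3 j hj
        have h3 : cnt Y j ≤ j := cnt_le Y j
        omega
    rw [hfind, symmDiff_symmDiff_cancel_right]
  · -- phi (psi Z) = Z
    intro Z hZ
    obtain ⟨hsub, hcard⟩ := Finset.mem_powersetCard.1 hZ
    have hlow := low_exists hk hn hsub hcard
    obtain ⟨hM1, hM2, hM3⟩ := first_low Z (lowIdx_spec Z hlow) (fun j hj => lowIdx_min Z hlow hj)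
    rw [psi_spec hlow]
    have hbad' : ∃ m, m < 2 * cnt (Z ∆ Finset.Icc 1 (lowIdx Z hlow)) m := by
      refine ⟨(lowIdx Z hlow), ?_⟩
      have h1 : cnt (Z ∆ Finset.Icc 1 (lowIdx Z hlow)) (lowIdx Z hlow) = (lowIdx Z hlow) - cnt Z (lowIdx Z hlow) := cnt_symmDiff Z le_rfl
      have h2 : cnt Z (lowIdx Z hlow) ≤ (lowIdx Z hlow) := cnt_le Z (lowIdx Z hlow)
      omega
    rw [phi_spec hbad']
    have hfind : badIdx (Z ∆ Finset.Icc 1 (lowIdx Z hlow)) hbad' = (lowIdx Z hlow) := by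
      rw [badIdx_eq_iff]
      constructor
      · have h1 : cnt (Z ∆ Finset.Icc 1 (lowIdx Z hlow)) (lowIdx Z hlow) = (lowIdx Z hlow) - cnt Z (lowIdx Z hlow) := cnt_symmDiff Z le_rfl
        have h2 : cnt Z (lowIdx Z hlow) ≤ (lowIdx Z hlow) := cnt_le Z (lowIdx Z hlow)
        omega
      · intro j hj
        have h1 : cnt (Z ∆ Finset.Icc 1 (lowIdx Z hlow)) j = j - cnt Z j := cnt_symmDiff Z (le_of_lt hj)
        have h2 := hM3 j hj
        have h3 : cnt Z j ≤ j := cnt_le Z j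
        omega
    rw [hfind, symmDiff_symmDiff_cancel_right]

/-- For `1 ≤ k ≤ n/2`, the difference `C(n,k) - C(n,k-1)` equals the number of
`k`-element subsets `Y` of `{1,…,n}` such that `|Y ∩ {1,…,m}| ≤ m/2` for all `m`. -/
theorem binomial_difference_count (n k : ℕ) (hk : 1 ≤ k) (hn : 2 * k ≤ n) :
    Nat.choose n k - Nat.choose n (k - 1) =
      (((Finset.Icc 1 n).powersetCard k).filter
        (fun Y => ∀ m ∈ Finset.Icc 1 n, 2 * (Y ∩ Finset.Icc 1 m).card ≤ m)).card := by
  set S := (Finset.Icc 1 n).powersetCard k with hS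
  have hScard : S.card = Nat.choose n k := by
    rw [hS, card_powersetCard]; simp
  have hsplit := Finset.card_filter_add_card_filter_not
    (s := S) (p := fun Y => ∀ m ∈ Finset.Icc 1 n, 2 * (Y ∩ Finset.Icc 1 m).card ≤ m)
  have hcongr : S.filter (fun Y => ¬ ∀ m ∈ Finset.Icc 1 n, 2 * (Y ∩ Finset.Icc 1 m).card ≤ m)
      = S.filter (fun Y => ∃ m, m < 2 * cnt Y m) := by
    ext Y
    simp only [Finset.mem_filter]
    refine and_congr_right fun hY => ?_
    obtain ⟨hsub, hcard⟩ := Finset.mem_powersetCard.1 hY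
    simp only [not_forall]
    constructor
    · rintro ⟨m, hm, hgt⟩
      exact ⟨m, by simp only [cnt]; omega⟩
    · rintro ⟨m, hm⟩
      simp only [cnt] at hm
      refine ⟨m, ?_, by omega⟩
      rw [Finset.mem_Icc]
      constructor
      · by_contra hc
        have hm0 : m = 0 := by omega
        subst hm0
        simp at hm
      · by_contra hc
        push_neg at hc
        have heq : Y ∩ Finset.Icc 1 m = Y := inter_eq_left.2
          (hsub.trans (Finset.Icc_subset_Icc_right (by omega)))
        rw [heq, hcard] at hm
        omega
  have hbadcard := bad_card n k hk hn
  rw [hcongr] at hsplit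
  rw [← hS] at hbadcard
  omega
end

section
/- For all integers n and k with 1 ≤ k ≤ n/2, there exists an injection ψ from the (k-1)-element subsets of {1,...,n} to the k-element subsets of {1,...,n} such that X ⊆ ψ(X) for every (k-1)-subset X. -/
open Finset

/-- For `1 ≤ k ≤ n/2` there is an injection `ψ` from `(k-1)`-subsets of `{1,…,n}`
to `k`-subsets of `{1,…,n}` with `X ⊆ ψ X` for all `X`. -/
theorem exists_nested_injection (n k : ℕ) (hk : 1 ≤ k) (hn : 2 * k ≤ n) :
    ∃ ψ : Finset ℕ → Finset ℕ,
      (∀ X ∈ (Finset.Icc 1 n).powersetCard (k - 1),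
          ψ X ∈ (Finset.Icc 1 n).powersetCard k ∧ X ⊆ ψ X) ∧
      Set.InjOn ψ ((Finset.Icc 1 n).powersetCard (k - 1) : Finset (Finset ℕ)) := by
  classical
  set S : Finset (Finset ℕ) := (Finset.Icc 1 n).powersetCard (k - 1) with hS
  -- the set of `k`-supersets of `X` inside `Icc 1 n`
  set t : {X // X ∈ S} → Finset (Finset ℕ) :=
    fun X => ((Finset.Icc 1 n) \ X.1).image (fun a => insert a X.1) with ht
  have hXcard : ∀ X : {X // X ∈ S}, X.1.card = k - 1 := by
    intro X
    exact (Finset.mem_powersetCard.mp X.2).2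
  have hXsub : ∀ X : {X // X ∈ S}, X.1 ⊆ Finset.Icc 1 n := by
    intro X
    exact (Finset.mem_powersetCard.mp X.2).1
  have htmem : ∀ X : {X // X ∈ S}, ∀ Y ∈ t X,
      Y ∈ (Finset.Icc 1 n).powersetCard k ∧ X.1 ⊆ Y := by
    intro X Y hY
    obtain ⟨a, ha, rfl⟩ := Finset.mem_image.mp hY
    obtain ⟨haI, haX⟩ := Finset.mem_sdiff.mp ha
    refine ⟨Finset.mem_powersetCard.mpr ⟨?_, ?_⟩, Finset.subset_insert _ _⟩
    · exact Finset.insert_subset haI (hXsub X)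
    · rw [Finset.card_insert_of_notMem haX, hXcard X]
      omega
  have htcard : ∀ X : {X // X ∈ S}, (t X).card = n - k + 1 := by
    intro X
    rw [ht]
    rw [Finset.card_image_of_injOn]
    · rw [Finset.card_sdiff_of_subset (hXsub X), Nat.card_Icc, hXcard X]
      omega
    · intro a ha b hb hab
      have haX := (Finset.mem_sdiff.mp ha).2
      have hbX := (Finset.mem_sdiff.mp hb).2
      by_contra hne
      have hab' : insert a X.1 = insert b X.1 := hab
      have : a ∈ insert b X.1 := by
        rw [← hab']; exact Finset.mem_insert_self a X.1
      rcases Finset.mem_insert.mp this with h | h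
      · exact hne h
      · exact haX h
  have hall : ∀ s : Finset {X // X ∈ S}, s.card ≤ (s.biUnion t).card := by
    intro s
    set N := s.biUnion t with hN
    -- double counting
    have h1 : ∀ X ∈ s, (n - k + 1) ≤ (N.filter (fun Y => X.1 ⊆ Y)).card := by
      intro X hX
      rw [← htcard X]
      apply Finset.card_le_card
      intro Y hY
      exact Finset.mem_filter.mpr ⟨Finset.mem_biUnion.mpr ⟨X, hX, hY⟩, (htmem X Y hY).2⟩
    have h2 : ∀ Y ∈ N, (s.filter (fun X => X.1 ⊆ Y)).card ≤ k := by
      intro Y hYN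
      obtain ⟨X₀, hX₀, hY⟩ := Finset.mem_biUnion.mp hYN
      have hYk : Y.card = k := (Finset.mem_powersetCard.mp (htmem X₀ Y hY).1).2
      have : (s.filter (fun X => X.1 ⊆ Y)).card ≤ (Y.powersetCard (k - 1)).card := by
        apply Finset.card_le_card_of_injOn (fun X => X.1)
        · intro X hX
          rw [Finset.mem_coe, Finset.mem_filter] at hX
          exact Finset.mem_powersetCard.mpr ⟨hX.2, hXcard X⟩
        · intro a _ b _ hab
          exact Subtype.ext hab
      rw [Finset.card_powersetCard, hYk] at this
      have hch : k.choose (k - 1) = k := by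
        conv_lhs => rw [← Nat.succ_pred_eq_of_pos hk]
        simp [Nat.choose_succ_self_right]
        omega
      omega
    -- count pairs
    have key : (n - k + 1) * s.card ≤ k * N.card := by
      calc (n - k + 1) * s.card = ∑ _X ∈ s, (n - k + 1) := by
            rw [Finset.sum_const, smul_eq_mul, mul_comm]
        _ ≤ ∑ X ∈ s, (N.filter (fun Y => X.1 ⊆ Y)).card := Finset.sum_le_sum h1
        _ = ∑ X ∈ s, ∑ Y ∈ N, (if X.1 ⊆ Y then 1 else 0) := by
            simp only [Finset.card_filter]
        _ = ∑ Y ∈ N, ∑ X ∈ s, (if X.1 ⊆ Y then 1 else 0) := Finset.sum_comm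
        _ = ∑ Y ∈ N, (s.filter (fun X => X.1 ⊆ Y)).card := by
            simp only [Finset.card_filter]
        _ ≤ ∑ _Y ∈ N, k := Finset.sum_le_sum h2
        _ = k * N.card := by rw [Finset.sum_const, smul_eq_mul, mul_comm]
    have hk' : k * s.card ≤ k * N.card := le_trans (Nat.mul_le_mul_right _ (by omega)) key
    exact Nat.le_of_mul_le_mul_left hk' hk
  obtain ⟨f, hfinj, hf⟩ :=
    (Finset.all_card_le_biUnion_card_iff_existsInjective' t).mp hall
  refine ⟨fun X => if h : X ∈ S then f ⟨X, h⟩ else X, ?_, ?_⟩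
  · intro X hX
    simp only [dif_pos hX]
    exact htmem ⟨X, hX⟩ _ (hf ⟨X, hX⟩)
  · intro X hX Y hY hXY
    simp only [Finset.coe_mem, Finset.mem_coe] at hX hY
    simp only [dif_pos hX, dif_pos hY] at hXY
    exact congrArg Subtype.val (hfinj hXY)
end

section
/- Define ψ on (k-1)-element subsets X of {1,...,n} (with 1 ≤ k ≤ n/2) as follows: let ℓ be the smallest nonnegative integer such that |X ∩ {1,...,2ℓ+1}| = ℓ (such ℓ exists), and set ψ(X) = (X \ {1,...,2ℓ+1}) ∪ ({1,...,2ℓ+1} \ X). Then ψ(X) has exactly k elements, and ψ is an injection from (k-1)-subsets to k-subsets of {1,...,n}. -/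
lemma refl_exists (k : ℕ) (X : Finset ℕ) (hcard : X.card = k - 1) :
    ∃ m ≤ k - 1, (X ∩ Finset.Icc 1 (2 * m + 1)).card = m := by
  have hle : ∀ m, (X ∩ Finset.Icc 1 (2 * m + 1)).card ≤ k - 1 := fun m =>
    le_trans (Finset.card_le_card Finset.inter_subset_left) (le_of_eq hcard)
  have hex : ∃ m, (X ∩ Finset.Icc 1 (2 * m + 1)).card ≤ m := ⟨k - 1, hle _⟩
  refine ⟨Nat.find hex, Nat.find_min' hex (hle _), ?_⟩
  have hspec := Nat.find_spec hex
  rcases Nat.eq_zero_or_pos (Nat.find hex) with h0 | hpos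
  · omega
  · have hmin := Nat.find_min hex (show Nat.find hex - 1 < Nat.find hex by omega)
    have hmono : (X ∩ Finset.Icc 1 (2 * (Nat.find hex - 1) + 1)).card ≤
        (X ∩ Finset.Icc 1 (2 * Nat.find hex + 1)).card :=
      Finset.card_le_card (Finset.inter_subset_inter le_rfl
        (Finset.Icc_subset_Icc_right (by omega)))
    omega

/-- The reflection-principle injection: for a `(k-1)`-subset `X` of `{1,…,n}`
(with `1 ≤ k ≤ n/2`), let `ℓ` be the smallest nonnegative integer with
`|X ∩ {1,…,2ℓ+1}| = ℓ` (it exists), and set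
`ψ(X) = (X \ {1,…,2ℓ+1}) ∪ ({1,…,2ℓ+1} \ X)`.  Then `|ψ(X)| = k` and `ψ` is an
injection from `(k-1)`-subsets to `k`-subsets of `{1,…,n}`. -/
theorem reflection_injection (n k : ℕ) (hk : 1 ≤ k) (hn : 2 * k ≤ n)
    (L : Finset ℕ → ℕ)
    (hL : ∀ X, L X = sInf {ℓ : ℕ | (X ∩ Finset.Icc 1 (2 * ℓ + 1)).card = ℓ})
    (ψ : Finset ℕ → Finset ℕ)
    (hψ : ∀ X, ψ X =
      (X \ Finset.Icc 1 (2 * L X + 1)) ∪ (Finset.Icc 1 (2 * L X + 1) \ X)) :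
    (∀ X ∈ (Finset.Icc 1 n).powersetCard (k - 1),
        {ℓ : ℕ | (X ∩ Finset.Icc 1 (2 * ℓ + 1)).card = ℓ}.Nonempty ∧
        (ψ X).card = k ∧ ψ X ∈ (Finset.Icc 1 n).powersetCard k) ∧
    Set.InjOn ψ ((Finset.Icc 1 n).powersetCard (k - 1) : Finset (Finset ℕ)) := by
  -- basic facts for any X in the domain
  have main : ∀ X ∈ (Finset.Icc 1 n).powersetCard (k - 1),
      (X ∩ Finset.Icc 1 (2 * L X + 1)).card = L X ∧ L X ≤ k - 1 ∧
      (∀ m < L X, (X ∩ Finset.Icc 1 (2 * m + 1)).card ≠ m) ∧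
      (∀ m ≤ L X, ψ X ∩ Finset.Icc 1 (2 * m + 1) = Finset.Icc 1 (2 * m + 1) \ X) := by
    intro X hX
    obtain ⟨hXsub, hXcard⟩ := Finset.mem_powersetCard.mp hX
    obtain ⟨m, hmle, hmeq⟩ := refl_exists k X hXcard
    have hne : {ℓ : ℕ | (X ∩ Finset.Icc 1 (2 * ℓ + 1)).card = ℓ}.Nonempty := ⟨m, hmeq⟩
    have hmem : (X ∩ Finset.Icc 1 (2 * L X + 1)).card = L X := by
      rw [hL]; exact Nat.sInf_mem hne
    have hLle : L X ≤ k - 1 := le_trans (by rw [hL]; exact Nat.sInf_le hmeq) hmle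
    have hmin : ∀ j < L X, (X ∩ Finset.Icc 1 (2 * j + 1)).card ≠ j := by
      intro j hj
      rw [hL] at hj
      exact fun h => Nat.notMem_of_lt_sInf hj h
    refine ⟨hmem, hLle, hmin, ?_⟩
    intro j hj
    have hsub : Finset.Icc 1 (2 * j + 1) ⊆ Finset.Icc 1 (2 * L X + 1) :=
      Finset.Icc_subset_Icc_right (by omega)
    ext x
    have hBA := @hsub x
    simp only [hψ, Finset.mem_inter, Finset.mem_union, Finset.mem_sdiff] at *
    tauto
  constructor
  · intro X hX
    obtain ⟨hXsub, hXcard⟩ := Finset.mem_powersetCard.mp hX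
    obtain ⟨hmem, hLle, hmin, hrecov⟩ := main X hX
    have hne : {ℓ : ℕ | (X ∩ Finset.Icc 1 (2 * ℓ + 1)).card = ℓ}.Nonempty := by
      obtain ⟨m, _, hmeq⟩ := refl_exists k X hXcard
      exact ⟨m, hmeq⟩
    set I := Finset.Icc 1 (2 * L X + 1) with hI
    have hIcard : I.card = 2 * L X + 1 := by
      rw [hI, Nat.card_Icc]; omega
    have hdisj : Disjoint (X \ I) (I \ X) := disjoint_sdiff_sdiff
    have h1 : (X \ I).card + (X ∩ I).card = X.card := Finset.card_sdiff_add_card_inter X I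
    have h2 : (I \ X).card + (I ∩ X).card = I.card := Finset.card_sdiff_add_card_inter I X
    have hIX : (I ∩ X).card = (X ∩ I).card := by rw [Finset.inter_comm]
    have hcard : (ψ X).card = k := by
      rw [hψ, Finset.card_union_of_disjoint hdisj]
      omega
    refine ⟨hne, hcard, Finset.mem_powersetCard.mpr ⟨?_, hcard⟩⟩
    rw [hψ]
    apply Finset.union_subset
    · exact le_trans Finset.sdiff_subset hXsub
    · refine le_trans Finset.sdiff_subset (Finset.Icc_subset_Icc_right (by omega))
  · intro X1 hX1 X2 hX2 heq
    simp only [Finset.coe_sort_coe, Finset.mem_coe] at hX1 hX2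
    obtain ⟨hmem1, hLle1, hmin1, hrecov1⟩ := main X1 hX1
    obtain ⟨hmem2, hLle2, hmin2, hrecov2⟩ := main X2 hX2
    -- show L X1 = L X2
    have key : ∀ Y1 Y2 : Finset ℕ, ψ Y1 = ψ Y2 →
        (Y1 ∩ Finset.Icc 1 (2 * L Y1 + 1)).card = L Y1 →
        (∀ m < L Y2, (Y2 ∩ Finset.Icc 1 (2 * m + 1)).card ≠ m) →
        (∀ m ≤ L Y1, ψ Y1 ∩ Finset.Icc 1 (2 * m + 1) = Finset.Icc 1 (2 * m + 1) \ Y1) →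
        (∀ m ≤ L Y2, ψ Y2 ∩ Finset.Icc 1 (2 * m + 1) = Finset.Icc 1 (2 * m + 1) \ Y2) →
        ¬ (L Y1 < L Y2) := by
      intro Y1 Y2 hYeq hm1 hmin2' hr1 hr2 hlt
      set m := L Y1
      have hIm : (Finset.Icc 1 (2 * m + 1)).card = 2 * m + 1 := by
        rw [Nat.card_Icc]; omega
      have e1 : ψ Y1 ∩ Finset.Icc 1 (2 * m + 1) = Finset.Icc 1 (2 * m + 1) \ Y1 :=
        hr1 m le_rfl
      have e2 : ψ Y2 ∩ Finset.Icc 1 (2 * m + 1) = Finset.Icc 1 (2 * m + 1) \ Y2 :=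
        hr2 m (le_of_lt hlt)
      have hc1 : (Finset.Icc 1 (2 * m + 1) \ Y1).card +
          (Finset.Icc 1 (2 * m + 1) ∩ Y1).card = 2 * m + 1 := by
        rw [Finset.card_sdiff_add_card_inter, hIm]
      have hc2 : (Finset.Icc 1 (2 * m + 1) \ Y2).card +
          (Finset.Icc 1 (2 * m + 1) ∩ Y2).card = 2 * m + 1 := by
        rw [Finset.card_sdiff_add_card_inter, hIm]
      have hi1 : (Finset.Icc 1 (2 * m + 1) ∩ Y1).card = m := by
        rw [Finset.inter_comm]; exact hm1
      have hi2 : (Finset.Icc 1 (2 * m + 1) ∩ Y2).card ≠ m := by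
        rw [Finset.inter_comm]; exact hmin2' m hlt
      have : Finset.Icc 1 (2 * m + 1) \ Y1 = Finset.Icc 1 (2 * m + 1) \ Y2 := by
        rw [← e1, ← e2, hYeq]
      rw [this] at hc1
      omega
    have hLeq : L X1 = L X2 := by
      rcases lt_trichotomy (L X1) (L X2) with h | h | h
      · exact absurd h (key X1 X2 heq hmem1 hmin2 hrecov1 hrecov2)
      · exact h
      · exact absurd h (key X2 X1 heq.symm hmem2 hmin1 hrecov2 hrecov1)
    -- recover X from ψ X by symmetric difference
    have hsd : ∀ Y : Finset ℕ, ψ Y = symmDiff Y (Finset.Icc 1 (2 * L Y + 1)) := by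
      intro Y; rw [hψ Y, symmDiff_def, Finset.sup_eq_union]
    have h1 : X1 = symmDiff (ψ X1) (Finset.Icc 1 (2 * L X1 + 1)) := by
      rw [hsd X1, symmDiff_symmDiff_cancel_right]
    have h2 : X2 = symmDiff (ψ X2) (Finset.Icc 1 (2 * L X2 + 1)) := by
      rw [hsd X2, symmDiff_symmDiff_cancel_right]
    rw [h1, h2, heq, hLeq]
end

section
/- For any simple graph G and any integer k ≥ 1, the matching numbers are log-concave: m_{k-1}(G) · m_{k+1}(G) ≤ m_k(G)^2, where m_k(G) is the number of matchings of G with exactly k edges. -/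
open Finset

namespace MLC

open scoped Classical

variable {E : Type*} [DecidableEq E]

lemma pathCount (adj : E → E → Prop)
    (hsymm : ∀ a b, adj a b → adj b a) (hirr : ∀ a, ¬ adj a a)
    (χ : E → Bool) :
    ∀ n (S : Finset E), S.card = n →
    (∀ e ∈ S, (S.filter (fun f => adj e f)).card ≤ 2) →
    (∀ e ∈ S, ∀ f ∈ S, adj e f → χ e ≠ χ f) →
    (∀ e ∈ S, ∀ f ∈ S, Relation.ReflTransGen (fun a b => a ∈ S ∧ b ∈ S ∧ adj a b) e f) →
    ∀ s ∈ S, (S.filter (fun f => adj s f)).card ≤ 1 →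
    (S.filter (fun e => χ e = χ s)).card = (S.card + 1) / 2 := by
  intro n
  induction n using Nat.strong_induction_on with
  | _ n IH =>
  intro S hcard hdeg hprop hconn s hs hsdeg
  rcases Nat.lt_or_ge (S.filter (fun f => adj s f)).card 1 with h0 | h1
  · -- degree 0 : S = {s}
    have hfe : S.filter (fun f => adj s f) = ∅ := card_eq_zero.mp (by omega)
    have hSs : S = {s} := by
      apply Finset.Subset.antisymm
      · intro e he
        have := hconn s hs e he
        rcases Relation.ReflTransGen.cases_head this with h | ⟨b, hb, _⟩
        · simp [← h]
        · exfalso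
          have : b ∈ S.filter (fun f => adj s f) := mem_filter.mpr ⟨hb.2.1, hb.2.2⟩
          simp [hfe] at this
      · intro e he; simp at he; simpa [he]
    rw [hSs]
    rw [filter_singleton]
    simp
  · -- degree 1
    have hone : (S.filter (fun f => adj s f)).card = 1 := le_antisymm hsdeg h1
    obtain ⟨t, ht⟩ := card_eq_one.mp hone
    have htS : t ∈ S ∧ adj s t := by
      have : t ∈ S.filter (fun f => adj s f) := by simp [ht]
      simpa using this
    have hts : t ≠ s := fun h => hirr s (h ▸ htS.2)
    set S' := S.erase s with hS'
    have htS' : t ∈ S' := mem_erase.mpr ⟨hts, htS.1⟩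
    have hsub : S' ⊆ S := erase_subset _ _
    have hbypass : ∀ e f : E, Relation.ReflTransGen (fun a b => a ∈ S ∧ b ∈ S ∧ adj a b) e f →
        e ≠ s → Relation.ReflTransGen (fun a b => a ∈ S' ∧ b ∈ S' ∧ adj a b) e
          (if f = s then t else f) := by
      intro e f hreach he
      induction hreach with
      | refl => rw [if_neg he]
      | @tail b c hab hbc ih =>
        obtain ⟨hbS, hcS, hbc⟩ := hbc
        by_cases hcs : c = s
        · rw [if_pos hcs]
          have hb : b ∈ S.filter (fun f => adj s f) :=
            mem_filter.mpr ⟨hbS, hsymm _ _ (hcs ▸ hbc)⟩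
          rw [ht, mem_singleton] at hb
          rwa [hb, if_neg hts] at ih
        · by_cases hbs : b = s
          · have hc : c ∈ S.filter (fun f => adj s f) := mem_filter.mpr ⟨hcS, hbs ▸ hbc⟩
            rw [ht, mem_singleton] at hc
            rw [if_neg hcs, hc]
            simpa [hbs] using ih
          · rw [if_neg hcs]
            rw [if_neg hbs] at ih
            exact Relation.ReflTransGen.tail ih
              ⟨mem_erase.mpr ⟨hbs, hbS⟩, mem_erase.mpr ⟨hcs, hcS⟩, hbc⟩
    have hconn' : ∀ e ∈ S', ∀ f ∈ S',
        Relation.ReflTransGen (fun a b => a ∈ S' ∧ b ∈ S' ∧ adj a b) e f := by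
      intro e he f hf
      have := hbypass e f (hconn e (hsub he) f (hsub hf)) (mem_erase.mp he).1
      rwa [if_neg (mem_erase.mp hf).1] at this
    have hdeg' : ∀ e ∈ S', (S'.filter (fun f => adj e f)).card ≤ 2 := by
      intro e he
      exact le_trans (card_le_card (filter_subset_filter _ hsub)) (hdeg e (hsub he))
    have hprop' : ∀ e ∈ S', ∀ f ∈ S', adj e f → χ e ≠ χ f := fun e he f hf =>
      hprop e (hsub he) f (hsub hf)
    have htdeg' : (S'.filter (fun f => adj t f)).card ≤ 1 := by
      have h1' : S'.filter (fun f => adj t f) = (S.filter (fun f => adj t f)).erase s := by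
        rw [hS', filter_erase]
      have hsmem : s ∈ S.filter (fun f => adj t f) :=
        mem_filter.mpr ⟨hs, hsymm _ _ htS.2⟩
      rw [h1', card_erase_of_mem hsmem]
      have := hdeg t htS.1
      omega
    have hn : S'.card = n - 1 := by rw [hS', card_erase_of_mem hs, hcard]
    have hnpos : 1 ≤ n := by rw [← hcard]; exact card_pos.mpr ⟨s, hs⟩
    have hIH := IH (n-1) (by omega) S' hn hdeg' hprop' hconn' t htS' htdeg'
    have hst : χ s ≠ χ t := hprop s hs t htS.1 htS.2
    have hsplit : S.filter (fun e => χ e = χ s) = insert s (S'.filter (fun e => χ e = χ s)) := by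
      ext e
      by_cases hes : e = s
      · subst hes; simp [hs]
      · simp [hS', mem_erase, hes, and_comm, and_assoc]
    have hcompl : S'.filter (fun e => χ e = χ s) = S' \ (S'.filter (fun e => χ e = χ t)) := by
      ext e
      simp only [mem_filter, mem_sdiff]
      constructor
      · intro ⟨h1', h2⟩
        refine ⟨h1', fun h3 => hst ?_⟩
        rw [← h2, h3.2]
      · intro ⟨h1', h2⟩
        refine ⟨h1', ?_⟩
        have h3 : χ e ≠ χ t := fun h => h2 ⟨h1', h⟩
        revert h3 hst; cases χ e <;> cases χ s <;> cases χ t <;> simp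
    have hsnot : s ∉ S'.filter (fun e => χ e = χ s) := fun h =>
      (mem_erase.mp (mem_filter.mp h).1).1 rfl
    rw [hsplit, card_insert_of_notMem hsnot, hcompl, card_sdiff_of_subset (filter_subset _ _), hIH, hn, hcard]
    have h2 : S'.card ≤ n - 1 := le_of_eq hn
    have h3 : (S'.filter (fun e => χ e = χ t)).card ≤ S'.card := card_le_card (filter_subset _ _)
    omega

end MLC

namespace MLC2
open MLC
open scoped Classical

variable {E : Type*} [DecidableEq E]

lemma balance (adj : E → E → Prop)
    (hsymm : ∀ a b, adj a b → adj b a) (hirr : ∀ a, ¬ adj a a)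
    (χ : E → Bool) (S : Finset E)
    (hdeg : ∀ e ∈ S, (S.filter (fun f => adj e f)).card ≤ 2)
    (hprop : ∀ e ∈ S, ∀ f ∈ S, adj e f → χ e ≠ χ f)
    (hconn : ∀ e ∈ S, ∀ f ∈ S, Relation.ReflTransGen (fun a b => a ∈ S ∧ b ∈ S ∧ adj a b) e f) :
    (S.filter (fun e => χ e = true)).card ≤ (S.filter (fun e => χ e = false)).card + 1 ∧
    (S.filter (fun e => χ e = false)).card ≤ (S.filter (fun e => χ e = true)).card + 1 := by
  have htotal : (S.filter (fun e => χ e = true)).card + (S.filter (fun e => χ e = false)).card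
      = S.card := by
    have h1 := Finset.card_filter_add_card_filter_not (s := S)
      (p := fun e => χ e = true)
    have h2 : S.filter (fun a => ¬ χ a = true) = S.filter (fun e => χ e = false) :=
      filter_congr (by intro e _; simp)
    rw [h2] at h1
    exact h1
  by_cases hleaf : ∃ s ∈ S, (S.filter (fun f => adj s f)).card ≤ 1
  · obtain ⟨s, hs, hsdeg⟩ := hleaf
    have hp := pathCount adj hsymm hirr χ S.card S rfl hdeg hprop hconn s hs hsdeg
    cases hχs : χ s with
    | true =>
      rw [hχs] at hp
      omega
    | false =>
      rw [hχs] at hp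
      omega
  · push_neg at hleaf
    -- every element has degree exactly 2 : double counting
    have hdeg2 : ∀ e ∈ S, (S.filter (fun f => adj e f)).card = 2 := fun e he =>
      le_antisymm (hdeg e he) (hleaf e he)
    have key : ∀ b : Bool, ((S ×ˢ S).filter (fun p => adj p.1 p.2 ∧ χ p.1 = b)).card
        = 2 * (S.filter (fun e => χ e = b)).card := by
      intro b
      have hset : (S ×ˢ S).filter (fun p => adj p.1 p.2 ∧ χ p.1 = b)
          = (S.filter (fun e => χ e = b)).biUnion
            (fun e => (S.filter (fun f => adj e f)).image (fun f => (e, f))) := by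
        ext ⟨e, f⟩
        simp only [mem_filter, mem_product, mem_biUnion, mem_image, Prod.mk.injEq]
        constructor
        · rintro ⟨⟨heS, hfS⟩, hadj, hb⟩
          exact ⟨e, ⟨heS, hb⟩, f, ⟨hfS, hadj⟩, rfl, rfl⟩
        · rintro ⟨e', ⟨heS, hb⟩, f', ⟨hfS, hadj⟩, rfl, rfl⟩
          exact ⟨⟨heS, hfS⟩, hadj, hb⟩
      rw [hset, card_biUnion]
      · rw [Finset.sum_congr rfl (fun e he => ?_), Finset.sum_const, smul_eq_mul, mul_comm]
        rw [Finset.card_image_of_injective _ (fun a b h => (Prod.mk.injEq _ _ _ _).mp h |>.2),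
          hdeg2 e (mem_filter.mp he).1]
      · intro x hx y hy hxy
        simp only [disjoint_left]
        intro p hp hq
        simp only [mem_image] at hp hq
        obtain ⟨_, _, rfl⟩ := hp
        obtain ⟨_, _, h⟩ := hq
        exact hxy ((Prod.mk.injEq _ _ _ _).mp h).1.symm
    have hbij : ((S ×ˢ S).filter (fun p => adj p.1 p.2 ∧ χ p.1 = true)).card
        = ((S ×ˢ S).filter (fun p => adj p.1 p.2 ∧ χ p.1 = false)).card := by
      apply Finset.card_nbij' (fun p => (p.2, p.1)) (fun p => (p.2, p.1))
      · rintro ⟨e, f⟩ hp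
        simp only [mem_coe, mem_filter, mem_product] at hp ⊢
        obtain ⟨⟨heS, hfS⟩, hadj, hb⟩ := hp
        have := hprop e heS f hfS hadj
        refine ⟨⟨hfS, heS⟩, hsymm _ _ hadj, ?_⟩
        rw [hb] at this
        exact Bool.not_eq_true _ ▸ (by revert this; cases χ f <;> simp)
      · rintro ⟨e, f⟩ hp
        simp only [mem_coe, mem_filter, mem_product] at hp ⊢
        obtain ⟨⟨heS, hfS⟩, hadj, hb⟩ := hp
        have := hprop e heS f hfS hadj
        refine ⟨⟨hfS, heS⟩, hsymm _ _ hadj, ?_⟩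
        rw [hb] at this
        revert this; cases χ f <;> simp
      · intro p _; rfl
      · intro p _; rfl
    rw [key true, key false] at hbij
    omega

end MLC2

namespace Core
open MLC MLC2
open scoped Classical

variable {V : Type*}

/-- pairwise disjoint set of edges -/
def PD (M : Finset (Sym2 V)) : Prop :=
  ∀ e ∈ M, ∀ f ∈ M, e ≠ f → ∀ v : V, v ∈ e → v ∉ f

def adj (e f : Sym2 V) : Prop := e ≠ f ∧ ∃ v : V, v ∈ e ∧ v ∈ f

lemma adj_symm : ∀ a b : Sym2 V, adj a b → adj b a := by
  rintro a b ⟨h1, v, h2, h3⟩; exact ⟨h1.symm, v, h3, h2⟩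

lemma adj_irr : ∀ a : Sym2 V, ¬ adj a a := by rintro a ⟨h1, _⟩; exact h1 rfl

/-- alternation along adjacency for a partition into two matchings -/
lemma alt {Z W : Finset (Sym2 V)} (hZ : PD Z) (hW : PD W) (hd : Disjoint Z W)
    {e f : Sym2 V} (he : e ∈ Z ∪ W) (hf : f ∈ Z ∪ W) (h : adj e f) :
    e ∈ Z ↔ f ∈ W := by
  obtain ⟨hne, v, hv1, hv2⟩ := h
  constructor
  · intro heZ
    rcases Finset.mem_union.mp hf with hfZ | hfW
    · exact absurd hv2 (hZ e heZ f hfZ hne v hv1)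
    · exact hfW
  · intro hfW
    rcases Finset.mem_union.mp he with heZ | heW
    · exact heZ
    · exact absurd hv2 (hW e heW f hfW hne v hv1)

section withD

variable (D : Finset (Sym2 V))

def reach (e f : Sym2 V) : Prop :=
  Relation.ReflTransGen (fun a b => a ∈ D ∧ b ∈ D ∧ adj a b) e f

lemma reach_symm {e f : Sym2 V} (h : reach D e f) : reach D f e :=
  (@Relation.ReflTransGen.stdSymm _ _
    ⟨fun a b ⟨h1, h2, h3⟩ => ⟨h2, h1, adj_symm a b h3⟩⟩).symm _ _ h

noncomputable def comp (e : Sym2 V) : Finset (Sym2 V) := D.filter (reach D e)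

lemma mem_comp_self {e : Sym2 V} (he : e ∈ D) : e ∈ comp D e :=
  Finset.mem_filter.mpr ⟨he, Relation.ReflTransGen.refl⟩

lemma comp_subset (e : Sym2 V) : comp D e ⊆ D := Finset.filter_subset _ _

lemma reach_of_mem_comp {e f : Sym2 V} (h : f ∈ comp D e) : reach D e f :=
  (Finset.mem_filter.mp h).2

lemma comp_eq_of_mem {e f : Sym2 V} (h : f ∈ comp D e) : comp D f = comp D e := by
  have hr := reach_of_mem_comp D h
  ext g
  simp only [comp, Finset.mem_filter]
  exact ⟨fun ⟨h1, h2⟩ => ⟨h1, hr.trans h2⟩, fun ⟨h1, h2⟩ => ⟨h1, (reach_symm D hr).trans h2⟩⟩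

lemma comp_disj {e f : Sym2 V} (h : ¬ (comp D e = comp D f)) :
    Disjoint (comp D e) (comp D f) := by
  rw [Finset.disjoint_left]
  intro g hg1 hg2
  exact h (by rw [← comp_eq_of_mem D hg1, ← comp_eq_of_mem D hg2])

/-- connectivity inside a component -/
lemma reach_in {e : Sym2 V} {f g : Sym2 V} (hf : f ∈ comp D e) (h : reach D f g) :
    Relation.ReflTransGen (fun a b => a ∈ comp D e ∧ b ∈ comp D e ∧ adj a b) f g := by
  induction h with
  | refl => exact Relation.ReflTransGen.refl
  | @tail b c hab hbc ih =>
    have hb : b ∈ comp D e := Finset.mem_filter.mpr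
      ⟨hbc.1, (reach_of_mem_comp D hf).trans hab⟩
    have hc : c ∈ comp D e := Finset.mem_filter.mpr
      ⟨hbc.2.1, ((reach_of_mem_comp D hf).trans hab).tail hbc⟩
    exact ih.tail ⟨hb, hc, hbc.2.2⟩

lemma comp_conn {e : Sym2 V} : ∀ f ∈ comp D e, ∀ g ∈ comp D e,
    Relation.ReflTransGen (fun a b => a ∈ comp D e ∧ b ∈ comp D e ∧ adj a b) f g := by
  intro f hf g hg
  exact reach_in D hf ((reach_symm D (reach_of_mem_comp D hf)).trans (reach_of_mem_comp D hg))

end withD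

section XY

variable (X Y : Finset (Sym2 V)) (hXY : Disjoint X Y) (hX : PD X) (hY : PD Y)

/-- degree bound : in the union of two matchings every edge has at most 2 neighbours -/
lemma deg_le_two (hXY : Disjoint X Y) (hX : PD X) (hY : PD Y) :
    ∀ e ∈ X ∪ Y, ((X ∪ Y).filter (fun f => adj e f)).card ≤ 2 := by
  intro e he
  have huniq : ∀ w : V, ∀ f₁ ∈ X ∪ Y, ∀ f₂ ∈ X ∪ Y, f₁ ≠ e → f₂ ≠ e →
      w ∈ e → w ∈ f₁ → w ∈ f₂ → f₁ = f₂ := by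
    intro w f₁ hf₁ f₂ hf₂ hne₁ hne₂ hwe hw1 hw2
    have hside : ∀ f ∈ X ∪ Y, f ≠ e → w ∈ f → (e ∈ X → f ∈ Y) ∧ (e ∈ Y → f ∈ X) := by
      intro f hf hne hwf
      constructor
      · intro heX
        rcases Finset.mem_union.mp hf with hfX | hfY
        · exact absurd hwf (hX e heX f hfX (Ne.symm hne) w hwe)
        · exact hfY
      · intro heY
        rcases Finset.mem_union.mp hf with hfX | hfY
        · exact hfX
        · exact absurd hwf (hY e heY f hfY (Ne.symm hne) w hwe)
    by_contra hne
    rcases Finset.mem_union.mp he with heX | heY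
    · have h1 := (hside f₁ hf₁ hne₁ hw1).1 heX
      have h2 := (hside f₂ hf₂ hne₂ hw2).1 heX
      exact (hY f₁ h1 f₂ h2 hne w hw1) hw2
    · have h1 := (hside f₁ hf₁ hne₁ hw1).2 heY
      have h2 := (hside f₂ hf₂ hne₂ hw2).2 heY
      exact (hX f₁ h1 f₂ h2 hne w hw1) hw2
  -- pick representatives of e
  induction e using Sym2.inductionOn with
  | hf u v =>
    calc ((X ∪ Y).filter (fun f => adj s(u,v) f)).card
        ≤ (Finset.univ : Finset Bool).card := by
          apply Finset.card_le_card_of_injOn (fun f => decide (u ∈ f))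
          · intro f _; exact Finset.mem_univ _
          · intro f₁ hf₁ f₂ hf₂ hdec
            have hd2 : (u ∈ f₁) ↔ (u ∈ f₂) := decide_eq_decide.mp hdec
            simp only [Finset.coe_filter, Set.mem_setOf_eq] at hf₁ hf₂
            obtain ⟨hf₁D, hne₁, w₁, hw₁e, hw₁f⟩ := hf₁
            obtain ⟨hf₂D, hne₂, w₂, hw₂e, hw₂f⟩ := hf₂
            by_cases hu : u ∈ f₁
            · have hu2 : u ∈ f₂ := hd2.mp hu
              exact huniq u f₁ hf₁D f₂ hf₂D (Ne.symm hne₁) (Ne.symm hne₂)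
                (Sym2.mem_mk_left u v) hu hu2
            · have hu2 : u ∉ f₂ := fun h => hu (hd2.mpr h)
              have hv1 : v ∈ f₁ := by
                rcases Sym2.mem_iff.mp hw₁e with h | h
                · exact absurd (h ▸ hw₁f) hu
                · exact h ▸ hw₁f
              have hv2 : v ∈ f₂ := by
                rcases Sym2.mem_iff.mp hw₂e with h | h
                · exact absurd (h ▸ hw₂f) hu2
                · exact h ▸ hw₂f
              exact huniq v f₁ hf₁D f₂ hf₂D (Ne.symm hne₁) (Ne.symm hne₂)
                (Sym2.mem_mk_right u v) hv1 hv2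
      _ = 2 := by simp

end XY

end Core

namespace Core
open MLC MLC2
open scoped Classical

variable {V : Type*}

section XY2

variable (X Y : Finset (Sym2 V))

lemma mem_Y_iff (hXY : Disjoint X Y) {f : Sym2 V} (hf : f ∈ X ∪ Y) :
    f ∈ Y ↔ f ∉ X := by
  constructor
  · intro h1 h2; exact Finset.disjoint_left.mp hXY h2 h1
  · intro h1; rcases Finset.mem_union.mp hf with h | h
    · exact absurd h h1
    · exact h

lemma prop_col (hXY : Disjoint X Y) (hX : PD X) (hY : PD Y) :
    ∀ f ∈ X ∪ Y, ∀ g ∈ X ∪ Y, adj f g →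
      (fun h => decide (h ∈ X)) f ≠ (fun h => decide (h ∈ X)) g := by
  intro f hf g hg hadj
  simp only [ne_eq, decide_eq_decide]
  intro hiff
  by_cases hfX : f ∈ X
  · have hgY : g ∈ Y := (alt hX hY hXY hf hg hadj).mp hfX
    exact (mem_Y_iff X Y hXY hg).mp hgY (hiff.mp hfX)
  · have hfY : f ∈ Y := (mem_Y_iff X Y hXY hf).mpr hfX
    have hf' : f ∈ Y ∪ X := by rwa [Finset.union_comm]
    have hg' : g ∈ Y ∪ X := by rwa [Finset.union_comm]
    have hgX : g ∈ X := (alt hY hX hXY.symm hf' hg' hadj).mp hfY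
    exact hfX (hiff.mpr hgX)

lemma balance_comp (hXY : Disjoint X Y) (hX : PD X) (hY : PD Y) {e : Sym2 V}
    (he : e ∈ X ∪ Y) :
    ((comp (X ∪ Y) e) ∩ Y).card ≤ ((comp (X ∪ Y) e) ∩ X).card + 1 ∧
    ((comp (X ∪ Y) e) ∩ X).card ≤ ((comp (X ∪ Y) e) ∩ Y).card + 1 := by
  set D := X ∪ Y with hD
  set c := comp D e with hc
  have hcD : c ⊆ D := comp_subset D e
  have hb := balance adj adj_symm adj_irr (fun h => decide (h ∈ X)) c
    (fun f hf => le_trans (Finset.card_le_card (Finset.filter_subset_filter _ hcD))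
      (deg_le_two X Y hXY hX hY f (hcD hf)))
    (fun f hf g hg hadj => prop_col X Y hXY hX hY f (hcD hf) g (hcD hg) hadj)
    (comp_conn D)
  have h1 : c.filter (fun f => decide (f ∈ X) = true) = c ∩ X := by
    ext f; simp [Finset.mem_inter, Finset.mem_filter]
  have h2 : c.filter (fun f => decide (f ∈ X) = false) = c ∩ Y := by
    ext f
    simp only [Finset.mem_inter, Finset.mem_filter, decide_eq_false_iff_not]
    constructor
    · intro ⟨ha, hb'⟩; exact ⟨ha, (mem_Y_iff X Y hXY (hcD ha)).mpr hb'⟩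
    · intro ⟨ha, hb'⟩; exact ⟨ha, (mem_Y_iff X Y hXY (hcD ha)).mp hb'⟩
  rw [h1, h2] at hb
  exact ⟨hb.2, hb.1⟩

lemma rigidity (hXY : Disjoint X Y) (hX : PD X) (hY : PD Y)
    {Z : Finset (Sym2 V)} (hZsub : Z ⊆ X ∪ Y) (hZ : PD Z) (hZc : PD ((X ∪ Y) \ Z))
    {e : Sym2 V} (he : e ∈ X ∪ Y) :
    (comp (X ∪ Y) e) ∩ Z = (comp (X ∪ Y) e) ∩ X ∨
    (comp (X ∪ Y) e) ∩ Z = (comp (X ∪ Y) e) ∩ Y := by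
  set D := X ∪ Y with hD
  have hZD : Z ∪ (D \ Z) = D := Finset.union_sdiff_of_subset hZsub
  have hZdisj : Disjoint Z (D \ Z) := Finset.disjoint_sdiff
  have claim : ∀ f, reach D e f → ((f ∈ Z ↔ f ∈ X) ↔ (e ∈ Z ↔ e ∈ X)) := by
    intro f hreach
    induction hreach with
    | refl => exact Iff.rfl
    | @tail b c hab hbc ih =>
      obtain ⟨hbD, hcD, hadj⟩ := hbc
      have hZalt : b ∈ Z ↔ ¬ (c ∈ Z) := by
        have h1 := alt hZ hZc hZdisj (by rw [hZD]; exact hbD) (by rw [hZD]; exact hcD) hadj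
        rw [Finset.mem_sdiff] at h1
        constructor
        · intro h; exact (h1.mp h).2
        · intro h; exact h1.mpr ⟨hcD, h⟩
      have hXalt : b ∈ X ↔ ¬ (c ∈ X) := by
        have h1 := alt hX hY hXY hbD hcD hadj
        rw [mem_Y_iff X Y hXY hcD] at h1
        exact h1
      constructor
      · intro h
        exact ih.mp (by rw [hZalt, hXalt]; exact not_congr h)
      · intro h
        have h2 := ih.mpr h
        rw [hZalt, hXalt] at h2
        by_cases hcZ : c ∈ Z
        · simp only [hcZ, not_true_eq_false, false_iff, not_not] at h2
          simp [hcZ, h2]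
        · simp only [hcZ, not_false_eq_true, true_iff, not_not] at h2
          simp [hcZ, h2]
  by_cases hcase : e ∈ Z ↔ e ∈ X
  · left
    ext f
    simp only [Finset.mem_inter]
    constructor
    · intro ⟨h1, h2⟩
      exact ⟨h1, ((claim f (reach_of_mem_comp D h1)).mpr hcase).mp h2⟩
    · intro ⟨h1, h2⟩
      exact ⟨h1, ((claim f (reach_of_mem_comp D h1)).mpr hcase).mpr h2⟩
  · right
    ext f
    simp only [Finset.mem_inter]
    have hkey : ∀ f ∈ comp D e, (f ∈ Z ↔ f ∉ X) := by
      intro f hf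
      have hcl := claim f (reach_of_mem_comp D hf)
      have hfD : f ∈ D := comp_subset D e hf
      constructor
      · intro h1 h2
        exact hcase (hcl.mp (by tauto))
      · intro h1
        by_contra h2
        exact hcase (hcl.mp (by tauto))
    constructor
    · intro ⟨h1, h2⟩
      exact ⟨h1, (mem_Y_iff X Y hXY (comp_subset D e h1)).mpr ((hkey f h1).mp h2)⟩
    · intro ⟨h1, h2⟩
      exact ⟨h1, (hkey f h1).mpr ((mem_Y_iff X Y hXY (comp_subset D e h1)).mp h2)⟩

end XY2

end Core

namespace Core
open MLC MLC2 Finset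
open scoped Classical

variable {V : Type*}

section CCdef

variable (X Y : Finset (Sym2 V))

noncomputable def CC : Finset (Finset (Sym2 V)) :=
  (X ∪ Y).image (fun e => comp (X ∪ Y) e)

lemma mem_CC_self {f : Sym2 V} (hf : f ∈ X ∪ Y) : comp (X ∪ Y) f ∈ CC X Y :=
  mem_image_of_mem _ hf

lemma CC_sub {c : Finset (Sym2 V)} (hc : c ∈ CC X Y) : c ⊆ X ∪ Y := by
  obtain ⟨e, _, rfl⟩ := mem_image.mp hc
  exact comp_subset _ e

lemma comp_eq_of_mem_CC {c : Finset (Sym2 V)} (hc : c ∈ CC X Y) {f : Sym2 V}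
    (hf : f ∈ c) : comp (X ∪ Y) f = c := by
  obtain ⟨e, _, rfl⟩ := mem_image.mp hc
  exact comp_eq_of_mem _ hf

lemma CC_disjoint {c₁ c₂ : Finset (Sym2 V)} (h₁ : c₁ ∈ CC X Y) (h₂ : c₂ ∈ CC X Y)
    (hne : c₁ ≠ c₂) : Disjoint c₁ c₂ := by
  obtain ⟨e₁, _, rfl⟩ := mem_image.mp h₁
  obtain ⟨e₂, _, rfl⟩ := mem_image.mp h₂
  exact comp_disj _ hne

lemma CC_biUnion_inter (W : Finset (Sym2 V)) (hW : W ⊆ X ∪ Y) :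
    (CC X Y).biUnion (fun c => c ∩ W) = W := by
  ext f
  simp only [mem_biUnion, mem_inter]
  constructor
  · rintro ⟨c, _, _, hf⟩; exact hf
  · intro hf
    exact ⟨comp (X ∪ Y) f, mem_CC_self X Y (hW hf), mem_comp_self _ (hW hf), hf⟩

lemma sum_inter (W : Finset (Sym2 V)) (hW : W ⊆ X ∪ Y) :
    ∑ c ∈ CC X Y, (c ∩ W).card = W.card := by
  rw [← Finset.card_biUnion, CC_biUnion_inter X Y W hW]
  intro c₁ h₁ c₂ h₂ hne
  exact Finset.disjoint_of_subset_left (inter_subset_left)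
    (Finset.disjoint_of_subset_right (inter_subset_left) (CC_disjoint X Y h₁ h₂ hne))

lemma classes_ne (hXY : Disjoint X Y) {c : Finset (Sym2 V)} (hc : c ∈ CC X Y) :
    c ∩ X ≠ c ∩ Y := by
  obtain ⟨e, he, rfl⟩ := mem_image.mp hc
  have hec : e ∈ comp (X ∪ Y) e := mem_comp_self _ he
  intro heq
  rcases mem_union.mp he with heX | heY
  · have : e ∈ comp (X ∪ Y) e ∩ Y := heq ▸ (mem_inter.mpr ⟨hec, heX⟩)
    exact disjoint_left.mp hXY heX (mem_inter.mp this).2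
  · have : e ∈ comp (X ∪ Y) e ∩ X := heq.symm ▸ (mem_inter.mpr ⟨hec, heY⟩)
    exact disjoint_left.mp hXY (mem_inter.mp this).2 heY

/-- pairwise-disjointness of any per-component selection of a matching class -/
lemma PD_pick (hX : PD X) (hY : PD Y) (g : Finset (Sym2 V) → Finset (Sym2 V))
    (hg : ∀ c ∈ CC X Y, g c ⊆ c ∧ (g c ⊆ X ∨ g c ⊆ Y)) :
    PD ((CC X Y).biUnion g) := by
  intro e he f hf hne v hv1 hv2
  obtain ⟨c₁, hc₁, he₁⟩ := mem_biUnion.mp he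
  obtain ⟨c₂, hc₂, hf₂⟩ := mem_biUnion.mp hf
  have he₁c : e ∈ c₁ := (hg c₁ hc₁).1 he₁
  have hf₂c : f ∈ c₂ := (hg c₂ hc₂).1 hf₂
  have hcc : c₁ = c₂ := by
    by_contra hccne
    -- e and f are adjacent hence in the same component
    have heD : e ∈ X ∪ Y := CC_sub X Y hc₁ he₁c
    have hfD : f ∈ X ∪ Y := CC_sub X Y hc₂ hf₂c
    have hadj : adj e f := ⟨hne, v, hv1, hv2⟩
    have hreach : reach (X ∪ Y) e f := Relation.ReflTransGen.single ⟨heD, hfD, hadj⟩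
    have h1 : comp (X ∪ Y) e = c₁ := comp_eq_of_mem_CC X Y hc₁ he₁c
    have h2 : comp (X ∪ Y) f = c₂ := comp_eq_of_mem_CC X Y hc₂ hf₂c
    have : f ∈ comp (X ∪ Y) e := mem_filter.mpr ⟨hfD, hreach⟩
    rw [← h1, ← h2] at hccne
    exact hccne (comp_eq_of_mem _ this).symm
  subst hcc
  rcases (hg c₁ hc₁).2 with hsub | hsub
  · exact hX e (hsub he₁) f (hsub hf₂) hne v hv1 hv2
  · exact hY e (hsub he₁) f (hsub hf₂) hne v hv1 hv2

/-- the "swap" set determined by a set of components -/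
noncomputable def WT (T : Finset (Finset (Sym2 V))) : Finset (Sym2 V) :=
  (CC X Y).biUnion (fun c => if c ∈ T then c ∩ Y else c ∩ X)

lemma WT_sub (T : Finset (Finset (Sym2 V))) : WT X Y T ⊆ X ∪ Y := by
  intro f hf
  obtain ⟨c, hc, hfc⟩ := mem_biUnion.mp hf
  split_ifs at hfc
  · exact CC_sub X Y hc (mem_inter.mp hfc).1
  · exact CC_sub X Y hc (mem_inter.mp hfc).1

lemma WT_inter (T : Finset (Finset (Sym2 V))) {c : Finset (Sym2 V)} (hc : c ∈ CC X Y) :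
    c ∩ WT X Y T = (if c ∈ T then c ∩ Y else c ∩ X) := by
  ext f
  simp only [mem_inter, WT, mem_biUnion]
  constructor
  · rintro ⟨hfc, c', hc', hfc'⟩
    have hfc'' : f ∈ c' := by split_ifs at hfc' <;> exact (mem_inter.mp hfc').1
    have : c' = c := by
      by_contra hne
      exact disjoint_left.mp (CC_disjoint X Y hc' hc hne) hfc'' hfc
    rwa [this] at hfc'
  · intro hf
    have hfc : f ∈ c := by split_ifs at hf <;> exact (mem_inter.mp hf).1
    exact ⟨hfc, c, hc, hf⟩

lemma WT_compl (T : Finset (Finset (Sym2 V))) (hXY : Disjoint X Y) :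
    (X ∪ Y) \ WT X Y T = (CC X Y).biUnion (fun c => if c ∈ T then c ∩ X else c ∩ Y) := by
  ext f
  simp only [mem_sdiff]
  constructor
  · rintro ⟨hfD, hfW⟩
    set c := comp (X ∪ Y) f with hcdef
    have hc : c ∈ CC X Y := mem_CC_self X Y hfD
    have hfc : f ∈ c := mem_comp_self _ hfD
    refine mem_biUnion.mpr ⟨c, hc, ?_⟩
    have hnotW : f ∉ c ∩ WT X Y T := fun h => hfW (mem_inter.mp h).2
    rw [WT_inter X Y T hc] at hnotW
    split_ifs at hnotW ⊢ with hcT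
    · refine mem_inter.mpr ⟨hfc, ?_⟩
      rcases mem_union.mp hfD with h | h
      · exact h
      · exact absurd (mem_inter.mpr ⟨hfc, h⟩) hnotW
    · refine mem_inter.mpr ⟨hfc, ?_⟩
      rcases mem_union.mp hfD with h | h
      · exact absurd (mem_inter.mpr ⟨hfc, h⟩) hnotW
      · exact h
  · intro hf
    obtain ⟨c, hc, hfc⟩ := mem_biUnion.mp hf
    have hfcc : f ∈ c := by split_ifs at hfc <;> exact (mem_inter.mp hfc).1
    have hfD : f ∈ X ∪ Y := CC_sub X Y hc hfcc
    refine ⟨hfD, fun hfW => ?_⟩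
    have : f ∈ c ∩ WT X Y T := mem_inter.mpr ⟨hfcc, hfW⟩
    rw [WT_inter X Y T hc] at this
    split_ifs at hfc this with hcT
    · exact disjoint_left.mp hXY (mem_inter.mp hfc).2 (mem_inter.mp this).2
    · exact disjoint_left.mp hXY (mem_inter.mp this).2 (mem_inter.mp hfc).2

lemma WT_card (T : Finset (Finset (Sym2 V))) :
    (WT X Y T).card = ∑ c ∈ CC X Y, (if c ∈ T then (c ∩ Y).card else (c ∩ X).card) := by
  rw [WT, Finset.card_biUnion]
  · apply Finset.sum_congr rfl
    intro c _
    split_ifs <;> rfl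
  · intro c₁ h₁ c₂ h₂ hne
    have hd := CC_disjoint X Y h₁ h₂ hne
    have s₁ : (if c₁ ∈ T then c₁ ∩ Y else c₁ ∩ X) ⊆ c₁ := by
      split_ifs <;> exact inter_subset_left
    have s₂ : (if c₂ ∈ T then c₂ ∩ Y else c₂ ∩ X) ⊆ c₂ := by
      split_ifs <;> exact inter_subset_left
    exact Finset.disjoint_of_subset_left s₁ (Finset.disjoint_of_subset_right s₂ hd)

end CCdef

end Core

namespace Core
open MLC MLC2 Finset
open scoped Classical

variable {V : Type*}

section Count

variable (X Y : Finset (Sym2 V))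

noncomputable def Pp : Finset (Finset (Sym2 V)) :=
  (CC X Y).filter (fun c => (c ∩ Y).card = (c ∩ X).card + 1)
noncomputable def Qq : Finset (Finset (Sym2 V)) :=
  (CC X Y).filter (fun c => (c ∩ X).card = (c ∩ Y).card + 1)
noncomputable def Rr : Finset (Finset (Sym2 V)) :=
  (CC X Y).filter (fun c => (c ∩ X).card = (c ∩ Y).card)

noncomputable def wfun (c : Finset (Sym2 V)) : ℤ :=
  ((c ∩ Y).card : ℤ) - ((c ∩ X).card : ℤ)

lemma PQR_cover (hXY : Disjoint X Y) (hX : PD X) (hY : PD Y) :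
    Pp X Y ∪ Qq X Y ∪ Rr X Y = CC X Y := by
  ext c
  simp only [Pp, Qq, Rr, mem_union, mem_filter]
  constructor
  · rintro ((h | h) | h) <;> exact h.1
  · intro hc
    obtain ⟨e, he, rfl⟩ := mem_image.mp hc
    have hb := balance_comp X Y hXY hX hY he
    refine ?_
    by_cases h1 : ((comp (X ∪ Y) e) ∩ Y).card = ((comp (X ∪ Y) e) ∩ X).card + 1
    · exact Or.inl (Or.inl ⟨hc, h1⟩)
    · by_cases h2 : ((comp (X ∪ Y) e) ∩ X).card = ((comp (X ∪ Y) e) ∩ Y).card + 1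
      · exact Or.inl (Or.inr ⟨hc, h2⟩)
      · exact Or.inr ⟨hc, by omega⟩

lemma PQ_disj : Disjoint (Pp X Y) (Qq X Y) := by
  rw [disjoint_left]; intro c h1 h2
  simp only [Pp, Qq, mem_filter] at h1 h2; omega

lemma PQR_disj : Disjoint (Pp X Y ∪ Qq X Y) (Rr X Y) := by
  rw [disjoint_left]; intro c h1 h2
  simp only [Pp, Qq, Rr, mem_union, mem_filter] at h1 h2
  rcases h1 with h1 | h1 <;> omega

lemma sum_wfun (T : Finset (Finset (Sym2 V))) (hT : T ⊆ CC X Y)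
    (hXY : Disjoint X Y) (hX : PD X) (hY : PD Y) :
    ∑ c ∈ T, wfun X Y c = ((T ∩ Pp X Y).card : ℤ) - ((T ∩ Qq X Y).card : ℤ) := by
  have hTsplit : T = (T ∩ Pp X Y) ∪ (T ∩ Qq X Y) ∪ (T ∩ Rr X Y) := by
    rw [← inter_union_distrib_left, ← inter_union_distrib_left,
      PQR_cover X Y hXY hX hY, inter_eq_left.mpr hT]
  have hd1 : Disjoint (T ∩ Pp X Y) (T ∩ Qq X Y) :=
    Finset.disjoint_of_subset_left inter_subset_right
      (Finset.disjoint_of_subset_right inter_subset_right (PQ_disj X Y))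
  have hd2 : Disjoint ((T ∩ Pp X Y) ∪ (T ∩ Qq X Y)) (T ∩ Rr X Y) := by
    refine Finset.disjoint_of_subset_right inter_subset_right
      (Finset.disjoint_of_subset_left ?_ (PQR_disj X Y))
    exact union_subset_union inter_subset_right inter_subset_right
  nth_rewrite 1 [hTsplit]
  rw [Finset.sum_union hd2, Finset.sum_union hd1]
  have e1 : ∑ c ∈ T ∩ Pp X Y, wfun X Y c = ((T ∩ Pp X Y).card : ℤ) := by
    have hco : ∀ c ∈ T ∩ Pp X Y, wfun X Y c = (1 : ℤ) := fun c hc => by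
      have := (mem_filter.mp (mem_inter.mp hc).2).2
      simp only [wfun]; omega
    rw [Finset.sum_congr rfl hco, Finset.sum_const]; simp
  have e2 : ∑ c ∈ T ∩ Qq X Y, wfun X Y c = -((T ∩ Qq X Y).card : ℤ) := by
    have hco : ∀ c ∈ T ∩ Qq X Y, wfun X Y c = (-1 : ℤ) := fun c hc => by
      have := (mem_filter.mp (mem_inter.mp hc).2).2
      simp only [wfun]; omega
    rw [Finset.sum_congr rfl hco, Finset.sum_const]; simp
  have e3 : ∑ c ∈ T ∩ Rr X Y, wfun X Y c = 0 := by
    have hco : ∀ c ∈ T ∩ Rr X Y, wfun X Y c = (0 : ℤ) := fun c hc => by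
      have := (mem_filter.mp (mem_inter.mp hc).2).2
      simp only [wfun]; omega
    rw [Finset.sum_congr rfl hco, Finset.sum_const, smul_zero]
  rw [e1, e2, e3]; ring

lemma P_card (hXY : Disjoint X Y) (hX : PD X) (hY : PD Y)
    (hcard : Y.card = X.card + 2) :
    (Pp X Y).card = (Qq X Y).card + 2 := by
  have h1 := sum_wfun X Y (CC X Y) (Finset.Subset.refl _) hXY hX hY
  have h2 : ∑ c ∈ CC X Y, wfun X Y c = ((Y.card : ℤ) - X.card) := by
    simp only [wfun]
    rw [Finset.sum_sub_distrib]
    have := sum_inter X Y Y (subset_union_right)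
    have := sum_inter X Y X (subset_union_left)
    push_cast
    rw [← Nat.cast_sum, ← Nat.cast_sum, sum_inter X Y Y (subset_union_right),
      sum_inter X Y X (subset_union_left)]
  have h3 : CC X Y ∩ Pp X Y = Pp X Y := inter_eq_right.mpr (filter_subset _ _)
  have h4 : CC X Y ∩ Qq X Y = Qq X Y := inter_eq_right.mpr (filter_subset _ _)
  rw [h3, h4, h2] at h1
  omega

lemma WT_card_int (T : Finset (Finset (Sym2 V))) (hT : T ⊆ CC X Y)
    (hXY : Disjoint X Y) (hX : PD X) (hY : PD Y) :
    ((WT X Y T).card : ℤ) = (X.card : ℤ) + ((T ∩ Pp X Y).card : ℤ) - ((T ∩ Qq X Y).card : ℤ) := by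
  rw [WT_card]
  have h1 : ((∑ c ∈ CC X Y, if c ∈ T then (c ∩ Y).card else (c ∩ X).card : ℕ) : ℤ)
      = ∑ c ∈ CC X Y, ((if c ∈ T then ((c ∩ Y).card : ℤ) else ((c ∩ X).card : ℤ))) := by
    push_cast
    apply Finset.sum_congr rfl
    intro c _
    split_ifs <;> rfl
  rw [h1]
  have h2 : ∀ c ∈ CC X Y, (if c ∈ T then ((c ∩ Y).card : ℤ) else ((c ∩ X).card : ℤ))
      = ((c ∩ X).card : ℤ) + (if c ∈ T then wfun X Y c else 0) := by
    intro c _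
    split_ifs with h
    · simp [wfun]
    · simp
  rw [Finset.sum_congr rfl h2, Finset.sum_add_distrib]
  have h3 : ∑ c ∈ CC X Y, ((c ∩ X).card : ℤ) = (X.card : ℤ) := by
    rw [← Nat.cast_sum, sum_inter X Y X (subset_union_left)]
  have h4 : ∑ c ∈ CC X Y, (if c ∈ T then wfun X Y c else 0) = ∑ c ∈ T, wfun X Y c := by
    rw [Finset.sum_ite_mem, inter_eq_right.mpr hT]
  rw [h3, h4, sum_wfun X Y T hT hXY hX hY]
  ring

end Count

end Core

namespace Core
open MLC MLC2 Finset
open scoped Classical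

variable {V : Type*}

section Bij

variable (X Y : Finset (Sym2 V))

lemma eq_of_inters {A B : Finset (Sym2 V)} (hA : A ⊆ X ∪ Y) (hB : B ⊆ X ∪ Y)
    (h : ∀ c ∈ CC X Y, c ∩ A = c ∩ B) : A = B := by
  rw [← CC_biUnion_inter X Y A hA, ← CC_biUnion_inter X Y B hB]
  apply Finset.biUnion_congr rfl
  intro c hc
  exact h c hc

lemma rigidity' (hXY : Disjoint X Y) (hX : PD X) (hY : PD Y)
    {Z : Finset (Sym2 V)} (hZsub : Z ⊆ X ∪ Y) (hZ : PD Z) (hZc : PD ((X ∪ Y) \ Z))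
    {c : Finset (Sym2 V)} (hc : c ∈ CC X Y) :
    c ∩ Z = c ∩ X ∨ c ∩ Z = c ∩ Y := by
  obtain ⟨e, he, rfl⟩ := mem_image.mp hc
  exact rigidity X Y hXY hX hY hZsub hZ hZc he

lemma NZ_eq_NT (s : ℕ) (hXY : Disjoint X Y) (hX : PD X) (hY : PD Y) :
    (((X ∪ Y).powerset).filter
      (fun Z => PD Z ∧ PD ((X ∪ Y) \ Z) ∧ Z.card = X.card + s)).card
    = (((CC X Y).powerset).filter
      (fun T => (T ∩ Pp X Y).card = (T ∩ Qq X Y).card + s)).card := by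
  apply Finset.card_bij' (i := fun Z _ => (CC X Y).filter (fun c => c ∩ Z = c ∩ Y))
    (j := fun T _ => WT X Y T)
  -- i maps into target
  · intro Z hZmem
    simp only [mem_filter, mem_powerset] at hZmem
    obtain ⟨hZsub, hZ, hZc, hZcard⟩ := hZmem
    set T := (CC X Y).filter (fun c => c ∩ Z = c ∩ Y) with hT
    have hTsub : T ⊆ CC X Y := filter_subset _ _
    have hZeq : Z = WT X Y T := by
      apply eq_of_inters X Y hZsub (WT_sub X Y T)
      intro c hc
      rw [WT_inter X Y T hc]
      split_ifs with h
      · exact (mem_filter.mp h).2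
      · rcases rigidity' X Y hXY hX hY hZsub hZ hZc hc with h1 | h1
        · exact h1
        · refine absurd (?_ : c ∈ T) h
          rw [hT, mem_filter]
          exact ⟨hc, h1⟩
    have hci := WT_card_int X Y T hTsub hXY hX hY
    rw [← hZeq, hZcard] at hci
    simp only [mem_filter, mem_powerset]
    refine ⟨hTsub, ?_⟩
    have h1 : ((T ∩ Qq X Y).card : ℤ) ≥ 0 := Int.natCast_nonneg _
    omega
  -- j maps into source
  · intro T hTmem
    simp only [mem_filter, mem_powerset] at hTmem
    obtain ⟨hTsub, hTcond⟩ := hTmem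
    simp only [mem_filter, mem_powerset]
    refine ⟨WT_sub X Y T, ?_, ?_, ?_⟩
    · apply PD_pick X Y hX hY
      intro c hc
      constructor
      · split_ifs <;> exact inter_subset_left
      · split_ifs
        · exact Or.inr inter_subset_right
        · exact Or.inl inter_subset_right
    · rw [WT_compl X Y T hXY]
      apply PD_pick X Y hX hY
      intro c hc
      constructor
      · split_ifs <;> exact inter_subset_left
      · split_ifs
        · exact Or.inl inter_subset_right
        · exact Or.inr inter_subset_right
    · have hci := WT_card_int X Y T hTsub hXY hX hY
      omega
  -- left inverse
  · intro Z hZmem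
    simp only [mem_filter, mem_powerset] at hZmem
    obtain ⟨hZsub, hZ, hZc, hZcard⟩ := hZmem
    show WT X Y ((CC X Y).filter (fun c => c ∩ Z = c ∩ Y)) = Z
    set T := (CC X Y).filter (fun c => c ∩ Z = c ∩ Y) with hT
    apply Eq.symm
    apply eq_of_inters X Y hZsub (WT_sub X Y T)
    intro c hc
    rw [WT_inter X Y T hc]
    split_ifs with h
    · exact (mem_filter.mp h).2
    · rcases rigidity' X Y hXY hX hY hZsub hZ hZc hc with h1 | h1
      · exact h1
      · refine absurd (?_ : c ∈ T) h
        rw [hT, mem_filter]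
        exact ⟨hc, h1⟩
  -- right inverse
  · intro T hTmem
    simp only [mem_filter, mem_powerset] at hTmem
    obtain ⟨hTsub, _⟩ := hTmem
    ext c
    simp only [mem_filter]
    constructor
    · rintro ⟨hc, hcond⟩
      rw [WT_inter X Y T hc] at hcond
      split_ifs at hcond with h
      · exact h
      · exact absurd hcond (classes_ne X Y hXY hc)
    · intro hcT
      have hc : c ∈ CC X Y := hTsub hcT
      refine ⟨hc, ?_⟩
      rw [WT_inter X Y T hc, if_pos hcT]

end Bij

end Core

namespace Core
open MLC MLC2 Finset
open scoped Classical

variable {V : Type*}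

section NTcount

variable (X Y : Finset (Sym2 V))

set_option maxHeartbeats 1600000 in
lemma NT_card (s : ℕ) (hXY : Disjoint X Y) (hX : PD X) (hY : PD Y) :
    (((CC X Y).powerset).filter
      (fun T => (T ∩ Pp X Y).card = (T ∩ Qq X Y).card + s)).card
    = ((Pp X Y ∪ Qq X Y).card.choose ((Qq X Y).card + s)) * 2 ^ (Rr X Y).card := by
  set P := Pp X Y with hPdef
  set Q := Qq X Y with hQdef
  set R := Rr X Y with hRdef
  have hPQ : Disjoint P Q := PQ_disj X Y
  have hPR : Disjoint P R :=
    Finset.disjoint_of_subset_left subset_union_left (PQR_disj X Y)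
  have hQR : Disjoint Q R :=
    Finset.disjoint_of_subset_left subset_union_right (PQR_disj X Y)
  have hPsub : P ⊆ CC X Y := filter_subset _ _
  have hQsub : Q ⊆ CC X Y := filter_subset _ _
  have hRsub : R ⊆ CC X Y := filter_subset _ _
  have hcover : P ∪ Q ∪ R = CC X Y := PQR_cover X Y hXY hX hY
  rw [← Finset.card_powersetCard, ← Finset.card_powerset, ← Finset.card_product]
  apply Finset.card_bij' (i := fun T _ => ((T ∩ P) ∪ (Q \ T), T ∩ R))
    (j := fun w _ => (w.1 ∩ P) ∪ (Q \ w.1) ∪ w.2)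
  · -- i into target
    intro T hT
    simp only [mem_filter, mem_powerset] at hT
    obtain ⟨hTsub, hTcond⟩ := hT
    simp only [mem_product, mem_powersetCard, mem_powerset]
    refine ⟨⟨?_, ?_⟩, inter_subset_right⟩
    · exact union_subset (inter_subset_right.trans subset_union_left)
        ((sdiff_subset).trans subset_union_right)
    · rw [card_union_of_disjoint]
      · have e1 : (Q ∩ T).card + (Q \ T).card = Q.card := card_inter_add_card_sdiff Q T
        have e2 : Q ∩ T = T ∩ Q := inter_comm _ _
        rw [e2] at e1
        omega
      · exact Finset.disjoint_of_subset_left inter_subset_right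
          (Finset.disjoint_of_subset_right (sdiff_subset) hPQ)
  · -- j into source
    rintro ⟨w, r⟩ hw
    simp only [mem_product, mem_powersetCard, mem_powerset] at hw
    obtain ⟨⟨hwsub, hwcard⟩, hrsub⟩ := hw
    simp only [mem_filter, mem_powerset]
    constructor
    · refine union_subset (union_subset ?_ ?_) ?_
      · exact inter_subset_right.trans hPsub
      · exact (sdiff_subset).trans hQsub
      · exact hrsub.trans hRsub
    · have hA : ((w ∩ P) ∪ (Q \ w) ∪ r) ∩ P = w ∩ P := by
        ext c
        have hf1 : c ∈ Q → c ∉ P := fun a b => disjoint_left.mp hPQ b a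
        have hf2 : c ∈ r → c ∉ P := fun a b => disjoint_left.mp hPR b (hrsub a)
        simp only [mem_union, mem_inter, mem_sdiff]
        tauto
      have hB : ((w ∩ P) ∪ (Q \ w) ∪ r) ∩ Q = Q \ w := by
        ext c
        have hf1 : c ∈ P → c ∉ Q := fun a b => disjoint_left.mp hPQ a b
        have hf2 : c ∈ r → c ∉ Q := fun a b => disjoint_left.mp hQR b (hrsub a)
        simp only [mem_union, mem_inter, mem_sdiff]
        tauto
      rw [hA, hB]
      have e1 : (w ∩ P).card + (w ∩ Q).card = w.card := by
        rw [← card_union_of_disjoint]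
        · congr 1
          rw [← inter_union_distrib_left, inter_eq_left.mpr hwsub]
        · exact Finset.disjoint_of_subset_left inter_subset_right
            (Finset.disjoint_of_subset_right inter_subset_right hPQ)
      have e2 : (Q ∩ w).card + (Q \ w).card = Q.card := card_inter_add_card_sdiff Q w
      have e3 : Q ∩ w = w ∩ Q := inter_comm _ _
      rw [e3] at e2
      omega
  · -- left inverse
    intro T hT
    simp only [mem_filter, mem_powerset] at hT
    obtain ⟨hTsub, _⟩ := hT
    ext c
    have hf1 : c ∈ P → c ∉ Q := fun a b => disjoint_left.mp hPQ a b
    have hf2 : c ∈ P → c ∉ R := fun a b => disjoint_left.mp hPR a b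
    have hf3 : c ∈ Q → c ∉ R := fun a b => disjoint_left.mp hQR a b
    have hf4 : c ∈ T → c ∈ P ∨ c ∈ Q ∨ c ∈ R := fun a => by
      have h := hTsub a
      rw [← hcover] at h
      simpa [mem_union, or_assoc] using h
    simp only [mem_union, mem_inter, mem_sdiff]
    tauto
  · -- right inverse
    rintro ⟨w, r⟩ hw
    simp only [mem_product, mem_powersetCard, mem_powerset] at hw
    obtain ⟨⟨hwsub, _⟩, hrsub⟩ := hw
    have hwPQ : ∀ c, c ∈ w → c ∈ P ∨ c ∈ Q := fun c a => mem_union.mp (hwsub a)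
    refine Prod.ext ?_ ?_
    · show ((w ∩ P) ∪ (Q \ w) ∪ r) ∩ P ∪ (Q \ ((w ∩ P) ∪ (Q \ w) ∪ r)) = w
      ext c
      have hf1 : c ∈ P → c ∉ Q := fun a b => disjoint_left.mp hPQ a b
      have hf2 : c ∈ r → c ∉ P := fun a b => disjoint_left.mp hPR b (hrsub a)
      have hf3 : c ∈ r → c ∉ Q := fun a b => disjoint_left.mp hQR b (hrsub a)
      have hf4 := hwPQ c
      simp only [mem_union, mem_inter, mem_sdiff]
      tauto
    · show ((w ∩ P) ∪ (Q \ w) ∪ r) ∩ R = r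
      ext c
      have hf1 : c ∈ P → c ∉ R := fun a b => disjoint_left.mp hPR a b
      have hf2 : c ∈ Q → c ∉ R := fun a b => disjoint_left.mp hQR a b
      have hf3 : c ∈ r → c ∈ R := fun a => hrsub a
      simp only [mem_union, mem_inter, mem_sdiff]
      tauto

end NTcount

end Core

namespace Core
open MLC MLC2 Finset
open scoped Classical

variable {V : Type*}

lemma PD_mono {M N : Finset (Sym2 V)} (h : PD M) (hsub : N ⊆ M) : PD N :=
  fun e he f hf hne v hv => h e (hsub he) f (hsub hf) hne v hv

lemma core_ineq (X Y : Finset (Sym2 V)) (hXY : Disjoint X Y) (hX : PD X) (hY : PD Y)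
    (hcard : Y.card = X.card + 2) :
    (((X ∪ Y).powerset).filter
      (fun Z => PD Z ∧ PD ((X ∪ Y) \ Z) ∧ Z.card = X.card + 0)).card ≤
    (((X ∪ Y).powerset).filter
      (fun Z => PD Z ∧ PD ((X ∪ Y) \ Z) ∧ Z.card = X.card + 1)).card := by
  rw [NZ_eq_NT X Y 0 hXY hX hY, NZ_eq_NT X Y 1 hXY hX hY,
    NT_card X Y 0 hXY hX hY, NT_card X Y 1 hXY hX hY]
  apply Nat.mul_le_mul_right
  have hPQ := P_card X Y hXY hX hY hcard
  have hd : (Pp X Y ∪ Qq X Y).card = 2 * (Qq X Y).card + 2 := by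
    rw [card_union_of_disjoint (PQ_disj X Y)]; omega
  rw [hd]
  have hmid := Nat.choose_le_middle ((Qq X Y).card + 0) (2 * (Qq X Y).card + 2)
  have h2 : (2 * (Qq X Y).card + 2) / 2 = (Qq X Y).card + 1 := by omega
  rw [h2] at hmid
  exact hmid

section Graph

variable [Fintype V] (G : SimpleGraph V)

noncomputable def Mk (k : ℕ) : Finset (Finset (Sym2 V)) :=
  Finset.univ.filter (fun M => (M : Set (Sym2 V)) ⊆ G.edgeSet ∧ M.card = k ∧ PD M)

lemma mem_Mk {k : ℕ} {M : Finset (Sym2 V)} :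
    M ∈ Mk G k ↔ (M : Set (Sym2 V)) ⊆ G.edgeSet ∧ M.card = k ∧ PD M := by
  simp [Mk]

lemma fiber_card (I D0 : Finset (Sym2 V)) (hID : I ⊆ D0)
    (hedge : (D0 : Set (Sym2 V)) ⊆ G.edgeSet) (hPDI : PD I)
    (hID2 : ∀ e ∈ I, ∀ f ∈ D0 \ I, ∀ v : V, v ∈ e → v ∉ f)
    (a b j : ℕ) (ha : a = I.card + j) (hb : b = I.card + ((D0 \ I).card - j))
    (hj : j ≤ (D0 \ I).card) :
    (((Mk G a) ×ˢ (Mk G b)).filter (fun p => p.1 ∩ p.2 = I ∧ p.1 ∪ p.2 = D0)).card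
    = (((D0 \ I).powerset).filter
        (fun Z => PD Z ∧ PD ((D0 \ I) \ Z) ∧ Z.card = j)).card := by
  apply Finset.card_bij' (i := fun p _ => p.1 \ I)
    (j := fun Z _ => (I ∪ Z, I ∪ ((D0 \ I) \ Z)))
  -- forward into target
  · rintro ⟨A, B⟩ hp
    simp only [mem_filter, mem_product] at hp
    obtain ⟨⟨hA, hB⟩, hIe, hUe⟩ := hp
    obtain ⟨hAedge, hAcard, hAPD⟩ := (mem_Mk G).mp hA
    obtain ⟨hBedge, hBcard, hBPD⟩ := (mem_Mk G).mp hB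
    have hIA : I ⊆ A := hIe ▸ inter_subset_left
    have hAD : A ⊆ D0 := hUe ▸ subset_union_left
    have hkey : (D0 \ I) \ (A \ I) = B \ I := by
      ext e
      have hu : e ∈ D0 ↔ e ∈ A ∨ e ∈ B := by rw [← hUe, mem_union]
      have hi : e ∈ I ↔ e ∈ A ∧ e ∈ B := by rw [← hIe, mem_inter]
      simp only [mem_sdiff]
      tauto
    simp only [mem_filter, mem_powerset]
    refine ⟨sdiff_subset_sdiff hAD (Finset.Subset.refl I), PD_mono hAPD sdiff_subset, ?_, ?_⟩
    · rw [hkey]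
      exact PD_mono hBPD sdiff_subset
    · have := card_sdiff_of_subset hIA
      have hIcard : I.card ≤ A.card := card_le_card hIA
      omega
  -- backward into source
  · intro Z hZ
    simp only [mem_filter, mem_powerset] at hZ
    obtain ⟨hZsub, hZPD, hZcPD, hZcard⟩ := hZ
    have hdisjIZ : Disjoint I Z := by
      rw [disjoint_left]
      intro e heI heZ
      exact (mem_sdiff.mp (hZsub heZ)).2 heI
    have hdisjIZ' : Disjoint I ((D0 \ I) \ Z) := by
      rw [disjoint_left]
      intro e heI heZ
      exact (mem_sdiff.mp (mem_sdiff.mp heZ).1).2 heI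
    have hPDunion : ∀ W ⊆ D0 \ I, PD W → PD (I ∪ W) := by
      intro W hWsub hWPD
      intro e he f hf hne v hve hvf
      rcases mem_union.mp he with heI | heW <;> rcases mem_union.mp hf with hfI | hfW
      · exact hPDI e heI f hfI hne v hve hvf
      · exact hID2 e heI f (hWsub hfW) v hve hvf
      · exact hID2 f hfI e (hWsub heW) v hvf hve
      · exact hWPD e heW f hfW hne v hve hvf
    have hAD : I ∪ Z ⊆ D0 := union_subset hID (hZsub.trans sdiff_subset)
    have hBD : I ∪ ((D0 \ I) \ Z) ⊆ D0 :=
      union_subset hID ((sdiff_subset).trans sdiff_subset)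
    simp only [mem_filter, mem_product]
    refine ⟨⟨?_, ?_⟩, ?_, ?_⟩
    · rw [mem_Mk]
      refine ⟨Set.Subset.trans ?_ hedge, ?_, hPDunion Z hZsub hZPD⟩
      · exact_mod_cast Finset.coe_subset.mpr hAD
      · rw [card_union_of_disjoint hdisjIZ, hZcard, ha]
    · rw [mem_Mk]
      refine ⟨Set.Subset.trans ?_ hedge, ?_, hPDunion _ sdiff_subset hZcPD⟩
      · exact_mod_cast Finset.coe_subset.mpr hBD
      · rw [card_union_of_disjoint hdisjIZ', card_sdiff_of_subset hZsub, hZcard, hb]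
    · -- intersection is I
      ext e
      have h1 : e ∈ Z → e ∉ I := fun a b => disjoint_left.mp hdisjIZ b a
      have h2 : e ∈ Z → e ∉ (D0 \ I) \ Z := fun a b => (mem_sdiff.mp b).2 a
      simp only [mem_inter, mem_union]
      tauto
    · -- union is D0
      ext e
      have h1 : e ∈ Z → e ∈ D0 ∧ e ∉ I := fun a => mem_sdiff.mp (hZsub a)
      have h3 : e ∈ I → e ∈ D0 := fun a => hID a
      simp only [mem_union, mem_sdiff]
      tauto
  -- left inverse
  · rintro ⟨A, B⟩ hp
    simp only [mem_filter, mem_product] at hp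
    obtain ⟨⟨hA, hB⟩, hIe, hUe⟩ := hp
    have hIA : I ⊆ A := hIe ▸ inter_subset_left
    have hIB : I ⊆ B := hIe ▸ inter_subset_right
    have hkey : (D0 \ I) \ (A \ I) = B \ I := by
      ext e
      have hu : e ∈ D0 ↔ e ∈ A ∨ e ∈ B := by rw [← hUe, mem_union]
      have hi : e ∈ I ↔ e ∈ A ∧ e ∈ B := by rw [← hIe, mem_inter]
      simp only [mem_sdiff]
      tauto
    have e1 : I ∪ (A \ I) = A := union_sdiff_of_subset hIA
    have e2 : I ∪ ((D0 \ I) \ (A \ I)) = B := by rw [hkey]; exact union_sdiff_of_subset hIB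
    exact Prod.ext e1 e2
  -- right inverse
  · intro Z hZ
    simp only [mem_filter, mem_powerset] at hZ
    obtain ⟨hZsub, _⟩ := hZ
    have hdisjIZ : Disjoint I Z := by
      rw [disjoint_left]
      intro e heI heZ
      exact (mem_sdiff.mp (hZsub heZ)).2 heI
    exact union_sdiff_cancel_left hdisjIZ

end Graph

end Core

namespace Core
open MLC MLC2 Finset
open scoped Classical

variable {V : Type*}

section Final

variable [Fintype V] (G : SimpleGraph V)

lemma main (m : ℕ) :
    (Mk G m).card * (Mk G (m + 2)).card ≤ (Mk G (m + 1)).card ^ 2 := by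
  set Φ : Finset (Sym2 V) × Finset (Sym2 V) → Finset (Sym2 V) × Finset (Sym2 V) :=
    fun p => (p.1 ∩ p.2, p.1 ∪ p.2) with hΦ
  set P₁ := (Mk G m) ×ˢ (Mk G (m + 2)) with hP₁
  set P₂ := (Mk G (m + 1)) ×ˢ (Mk G (m + 1)) with hP₂
  set s := P₁.image Φ with hs
  have hcard1 : P₁.card = ∑ t ∈ s, (P₁.filter (fun p => Φ p = t)).card :=
    card_eq_sum_card_fiberwise (fun x hx => mem_image_of_mem Φ hx)
  have hfib : ∀ t ∈ s, (P₁.filter (fun p => Φ p = t)).card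
      ≤ (P₂.filter (fun p => Φ p = t)).card := by
    intro t ht
    obtain ⟨⟨A₀, B₀⟩, hp₀, hΦ₀⟩ := mem_image.mp ht
    rw [hP₁, mem_product] at hp₀
    obtain ⟨hA₀, hB₀⟩ := hp₀
    obtain ⟨hAedge, hAcard, hAPD⟩ := (mem_Mk G).mp hA₀
    obtain ⟨hBedge, hBcard, hBPD⟩ := (mem_Mk G).mp hB₀
    set I := A₀ ∩ B₀ with hI
    set D0 := A₀ ∪ B₀ with hD0
    set X := A₀ \ I with hX
    set Y := B₀ \ I with hY
    have hIA : I ⊆ A₀ := inter_subset_left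
    have hIB : I ⊆ B₀ := inter_subset_right
    have hID : I ⊆ D0 := hIA.trans subset_union_left
    have hXY_disj : Disjoint X Y := by
      rw [disjoint_left]
      intro e heX heY
      exact (mem_sdiff.mp heX).2 (mem_inter.mpr ⟨(mem_sdiff.mp heX).1, (mem_sdiff.mp heY).1⟩)
    have hXuY : X ∪ Y = D0 \ I := by
      ext e
      simp only [hX, hY, hD0, mem_union, mem_sdiff]
      tauto
    have hPDX : PD X := PD_mono hAPD sdiff_subset
    have hPDY : PD Y := PD_mono hBPD sdiff_subset
    have hIcard : I.card ≤ m := hAcard ▸ card_le_card hIA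
    have hXcard : X.card = m - I.card := by rw [hX, card_sdiff_of_subset hIA, hAcard]
    have hYcard : Y.card = m + 2 - I.card := by
      rw [hY, card_sdiff_of_subset hIB, hBcard]
    have hIcard2 : I.card ≤ m + 2 := hBcard ▸ card_le_card hIB
    have hYX : Y.card = X.card + 2 := by omega
    have hDIcard : (D0 \ I).card = X.card + Y.card := by
      rw [← hXuY, card_union_of_disjoint hXY_disj]
    have hedge : (D0 : Set (Sym2 V)) ⊆ G.edgeSet := by
      intro e he
      rw [hD0] at he
      simp only [coe_union, Set.mem_union] at he
      rcases he with h | h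
      · exact hAedge h
      · exact hBedge h
    have hPDI : PD I := PD_mono hAPD hIA
    have hID2 : ∀ e ∈ I, ∀ f ∈ D0 \ I, ∀ v : V, v ∈ e → v ∉ f := by
      intro e heI f hf v hve hvf
      have hfD : f ∈ D0 := (mem_sdiff.mp hf).1
      have hfI : f ∉ I := (mem_sdiff.mp hf).2
      have hne : e ≠ f := fun h => hfI (h ▸ heI)
      rcases mem_union.mp hfD with hfA | hfB
      · exact hAPD e (hIA heI) f hfA hne v hve hvf
      · exact hBPD e (hIB heI) f hfB hne v hve hvf
    have ht' : t = (I, D0) := by rw [← hΦ₀]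
    have hconv : ∀ (a b : ℕ), ((Mk G a) ×ˢ (Mk G b)).filter (fun p => Φ p = (I, D0))
        = ((Mk G a) ×ˢ (Mk G b)).filter (fun p => p.1 ∩ p.2 = I ∧ p.1 ∪ p.2 = D0) := by
      intro a b
      apply filter_congr
      intro p _
      rw [hΦ, Prod.ext_iff]
    have hf1 := fiber_card G I D0 hID hedge hPDI hID2 m (m + 2) X.card
      (by omega) (by omega) (by omega)
    have hf2 := fiber_card G I D0 hID hedge hPDI hID2 (m + 1) (m + 1) (X.card + 1)
      (by omega) (by omega) (by omega)
    have hcore := core_ineq X Y hXY_disj hPDX hPDY hYX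
    rw [hXuY] at hcore
    rw [ht', hP₁, hP₂, hconv, hconv, hf1, hf2]
    have hz : X.card + 0 = X.card := by omega
    rw [hz] at hcore
    exact hcore
  have hcard2 : ∑ t ∈ s, (P₂.filter (fun p => Φ p = t)).card ≤ P₂.card := by
    set P₂' := P₂.filter (fun p => Φ p ∈ s) with hP₂'
    have heqf : ∀ t ∈ s, P₂.filter (fun p => Φ p = t) = P₂'.filter (fun p => Φ p = t) := by
      intro t ht
      ext p
      simp only [hP₂', mem_filter]
      constructor
      · rintro ⟨h1, h2⟩; exact ⟨⟨h1, h2 ▸ ht⟩, h2⟩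
      · rintro ⟨⟨h1, _⟩, h2⟩; exact ⟨h1, h2⟩
    rw [Finset.sum_congr rfl (fun t ht => by rw [heqf t ht])]
    rw [← card_eq_sum_card_fiberwise (s := P₂') (t := s) (f := Φ) (fun x hx => (mem_filter.mp hx).2)]
    exact card_le_card (filter_subset _ _)
  calc (Mk G m).card * (Mk G (m + 2)).card = P₁.card := by rw [hP₁, card_product]
    _ = ∑ t ∈ s, (P₁.filter (fun p => Φ p = t)).card := hcard1
    _ ≤ ∑ t ∈ s, (P₂.filter (fun p => Φ p = t)).card := Finset.sum_le_sum hfib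
    _ ≤ P₂.card := hcard2
    _ = (Mk G (m + 1)).card ^ 2 := by rw [hP₂, card_product, sq]

end Final

end Core

/-- `matchingCount G k` is the number of `k`-matchings of `G`: sets of `k` edges of `G`
that are pairwise disjoint (no two share a vertex). -/
noncomputable def matchingCount {V : Type*} [Fintype V] (G : SimpleGraph V) (k : ℕ) : ℕ :=
  Nat.card {M : Finset (Sym2 V) //
    (M : Set (Sym2 V)) ⊆ G.edgeSet ∧ M.card = k ∧
    ∀ e ∈ M, ∀ f ∈ M, e ≠ f → ∀ v : V, v ∈ e → v ∉ f}

open scoped Classical in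
lemma matchingCount_eq {V : Type*} [Fintype V] (G : SimpleGraph V) (k : ℕ) :
    matchingCount G k = (Core.Mk G k).card := by
  rw [matchingCount, Nat.card_eq_fintype_card, Fintype.card_subtype]
  congr 1
  rw [Core.Mk]
  apply filter_congr
  intro M _
  rfl

/-- Log-concavity of matching numbers (Heilmann–Lieb):
`m_{k-1}(G) ⋅ m_{k+1}(G) ≤ m_k(G)²` for any simple graph `G` and `k ≥ 1`. -/
theorem matching_log_concave {V : Type*} [Fintype V] (G : SimpleGraph V) (k : ℕ)
    (hk : 1 ≤ k) :
    matchingCount G (k - 1) * matchingCount G (k + 1) ≤ matchingCount G k ^ 2 := by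
  obtain ⟨m, rfl⟩ : ∃ m, k = m + 1 := ⟨k - 1, by omega⟩
  rw [matchingCount_eq, matchingCount_eq, matchingCount_eq]
  have h1 : m + 1 - 1 = m := by omega
  have h2 : m + 1 + 1 = m + 2 := by omega
  rw [h1, h2]
  exact Core.main G m
end

section
/- For any partition λ of n, the square of the number of standard Young tableaux of shape λ is at most n!: (f^λ)² ≤ n!. -/
/-- The cells of the Young diagram of a partition `p ⊢ n`:
`(i, j)` (0-indexed) is a cell iff `i` is less than the number of parts of `p`
exceeding `j`. -/
def cellsOf {n : ℕ} (p : Nat.Partition n) : Finset (ℕ × ℕ) :=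
  (Finset.range n ×ˢ Finset.range n).filter
    fun c => c.1 < (p.parts.filter fun a => c.2 < a).card

/-- `sytCount p` is the number `f^p` of standard Young tableaux of shape `p ⊢ n`:
bijective fillings of the cells of `p` by `{0,…,n-1}`, strictly increasing along
rows and columns. -/
noncomputable def sytCount {n : ℕ} (p : Nat.Partition n) : ℕ :=
  Nat.card {T : cellsOf p → Fin n //
    Function.Bijective T ∧
    (∀ c d : cellsOf p, c.1.1 = d.1.1 → c.1.2 < d.1.2 → T c < T d) ∧
    (∀ c d : cellsOf p, c.1.2 = d.1.2 → c.1.1 < d.1.1 → T c < T d)}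



namespace SytAux
open YoungDiagram Finset

instance : DecidableEq YoungDiagram := fun D E =>
  decidable_of_iff (D.cells = E.cells) (by
    constructor
    · intro h; cases D; cases E; simpa using h
    · intro h; rw [h])

/-- rows where a box can be removed -/
def cornerRows (D : YoungDiagram) : Finset ℕ :=
  (Finset.range (D.cells.card + 1)).filter (fun i => D.rowLen (i+1) < D.rowLen i)

/-- rows where a box can be added -/
def addRows (D : YoungDiagram) : Finset ℕ :=
  (Finset.range (D.cells.card + 1)).filter (fun i => i = 0 ∨ D.rowLen i < D.rowLen (i-1))

lemma colLen_le_card (D : YoungDiagram) (j : ℕ) : D.colLen j ≤ D.cells.card := by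
  rw [D.colLen_eq_card]
  exact Finset.card_le_card (Finset.filter_subset _ _)

lemma row_lt_card {D : YoungDiagram} {c : ℕ × ℕ} (h : c ∈ D) : c.1 < D.cells.card := by
  have h1 : c.1 < D.colLen c.2 := by
    rw [← mem_iff_lt_colLen]; simpa using h
  exact lt_of_lt_of_le h1 (le_trans (D.colLen_anti 0 c.2 (Nat.zero_le _)) (colLen_le_card D 0))

lemma rowLen_pos_iff {D : YoungDiagram} {i : ℕ} : 0 < D.rowLen i ↔ (i, 0) ∈ D := by
  rw [mem_iff_lt_rowLen]

/-- adding a box at the end of row `i` -/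
def addBox (D : YoungDiagram) (i : ℕ) (h : i = 0 ∨ D.rowLen i < D.rowLen (i-1)) :
    YoungDiagram where
  cells := insert (i, D.rowLen i) D.cells
  isLowerSet := by
    rintro ⟨y1, y2⟩ ⟨x1, x2⟩ ⟨hx1 : x1 ≤ y1, hx2 : x2 ≤ y2⟩ hy
    simp only [Finset.coe_insert, Set.mem_insert_iff, mem_cells, Prod.mk.injEq] at hy ⊢
    obtain ⟨rfl, rfl⟩ | hy := hy
    · rcases eq_or_lt_of_le hx1 with rfl | hlt
      · rcases eq_or_lt_of_le hx2 with rfl | h2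
        · left; exact ⟨rfl, rfl⟩
        · right; exact mem_iff_lt_rowLen.mpr h2
      · right
        rcases h with rfl | h
        · omega
        · have ha : D.rowLen (y1-1) ≤ D.rowLen x1 := D.rowLen_anti _ _ (by omega)
          exact mem_iff_lt_rowLen.mpr (by omega)
    · right; exact D.up_left_mem hx1 hx2 hy

/-- removing the box at the end of row `i` -/
def delBox (D : YoungDiagram) (i : ℕ) (h : D.rowLen (i+1) < D.rowLen i) :
    YoungDiagram where
  cells := D.cells.erase (i, D.rowLen i - 1)
  isLowerSet := by
    rintro ⟨y1, y2⟩ ⟨x1, x2⟩ ⟨hx1 : x1 ≤ y1, hx2 : x2 ≤ y2⟩ hy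
    simp only [Finset.coe_erase, Set.mem_diff, mem_cells, Set.mem_singleton_iff,
      Prod.mk.injEq] at hy ⊢
    obtain ⟨hyD, hyne⟩ := hy
    refine ⟨D.up_left_mem hx1 hx2 hyD, ?_⟩
    rintro ⟨rfl, rfl⟩
    have hyr : y2 < D.rowLen y1 := mem_iff_lt_rowLen.mp hyD
    rcases eq_or_lt_of_le hx1 with rfl | hlt
    · have hri : 0 < D.rowLen x1 := by omega
      exact hyne ⟨rfl, by omega⟩
    · have : (x1+1, D.rowLen x1 - 1) ∈ D := D.up_left_mem (by omega) hx2 hyD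
      have := mem_iff_lt_rowLen.mp this
      omega
/-- all diagrams obtained from `D` by adding one box -/
noncomputable def uppers (D : YoungDiagram) : Finset YoungDiagram :=
  (addRows D).attach.image (fun i =>
    addBox D i.1 (by have := i.2; simp only [addRows, Finset.mem_filter] at this; exact this.2))

/-- all diagrams obtained from `D` by removing one box -/
noncomputable def lowers (D : YoungDiagram) : Finset YoungDiagram :=
  (cornerRows D).attach.image (fun i =>
    delBox D i.1 (by have := i.2; simp only [cornerRows, Finset.mem_filter] at this; exact this.2))

lemma yd_ext {D E : YoungDiagram} (h : D.cells = E.cells) : D = E := by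
  cases D; cases E; simpa using h

lemma addBox_cell_not_mem (D : YoungDiagram) (i : ℕ) : (i, D.rowLen i) ∉ D := by
  rw [mem_iff_lt_rowLen]; omega

lemma mem_uppers {D E : YoungDiagram} :
    E ∈ uppers D ↔ D ≤ E ∧ E.cells.card = D.cells.card + 1 := by
  constructor
  · rintro hE
    simp only [uppers, Finset.mem_image, Finset.mem_attach, true_and] at hE
    obtain ⟨⟨i, hi⟩, rfl⟩ := hE
    constructor
    · intro c hc
      simp only [addBox, SetLike.mem_coe, YoungDiagram.mem_mk, Finset.mem_insert] at *
      exact Finset.mem_insert_of_mem hc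
    · show (insert (i, D.rowLen i) D.cells).card = _
      rw [Finset.card_insert_of_notMem (by
        simp only [mem_cells]; exact addBox_cell_not_mem D i)]
  · rintro ⟨hle, hcard⟩
    have hsub : D.cells ⊆ E.cells := cells_subset_iff.mpr hle
    have hsd : (E.cells \ D.cells).card = 1 := by
      rw [Finset.card_sdiff_of_subset hsub]; omega
    obtain ⟨c, hc⟩ := Finset.card_eq_one.mp hsd
    have hcells : E.cells = insert c D.cells := by
      ext x
      constructor
      · intro hx
        by_cases hxD : x ∈ D.cells
        · exact Finset.mem_insert_of_mem hxD
        · have : x ∈ E.cells \ D.cells := Finset.mem_sdiff.mpr ⟨hx, hxD⟩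
          rw [hc, Finset.mem_singleton] at this
          exact this ▸ Finset.mem_insert_self c D.cells
      · intro hx
        rcases Finset.mem_insert.mp hx with rfl | hx
        · have : x ∈ E.cells \ D.cells := by rw [hc]; exact Finset.mem_singleton_self x
          exact (Finset.mem_sdiff.mp this).1
        · exact hsub hx
    have hcmem : c ∈ E.cells \ D.cells := by rw [hc]; exact Finset.mem_singleton_self c
    obtain ⟨hcE, hcD⟩ := Finset.mem_sdiff.mp hcmem
    obtain ⟨i, j⟩ := c
    -- j = D.rowLen i
    have hj : j = D.rowLen i := by
      have h1 : ¬ j < D.rowLen i := fun h => hcD (mem_cells _ |>.mpr (mem_iff_lt_rowLen.mpr h))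
      by_contra hne
      have hgt : D.rowLen i < j := by omega
      have : (i, D.rowLen i) ∈ E := E.up_left_mem le_rfl (le_of_lt hgt) (by rwa [mem_cells] at hcE)
      have hmem : (i, D.rowLen i) ∈ E.cells \ D.cells :=
        Finset.mem_sdiff.mpr ⟨mem_cells _ |>.mp this,
          fun h => addBox_cell_not_mem D i ((mem_cells _).mp h)⟩
      rw [hc, Finset.mem_singleton, Prod.mk.injEq] at hmem
      omega
    subst hj
    have hrange : i ∈ Finset.range (D.cells.card + 1) := by
      rw [Finset.mem_range]
      have : i < E.cells.card := row_lt_card ((mem_cells _).mp hcE)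
      omega
    have hcond : i = 0 ∨ D.rowLen i < D.rowLen (i-1) := by
      by_cases hi0 : i = 0
      · left; exact hi0
      · right
        have : (i-1, D.rowLen i) ∈ E := E.up_left_mem (by omega) le_rfl
          ((mem_cells _).mp hcE)
        have hD : (i-1, D.rowLen i) ∈ D.cells := by
          have hxE := (mem_cells _).mp this
          by_contra hxD
          have : (i-1, D.rowLen i) ∈ E.cells \ D.cells :=
            Finset.mem_sdiff.mpr ⟨(mem_cells _).mpr hxE, hxD⟩
          rw [hc, Finset.mem_singleton, Prod.mk.injEq] at this
          omega
        have := mem_iff_lt_rowLen.mp ((mem_cells _).mp hD)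
        exact this
    have hmem : i ∈ addRows D := Finset.mem_filter.mpr ⟨hrange, hcond⟩
    simp only [uppers, Finset.mem_image, Finset.mem_attach, true_and]
    refine ⟨⟨i, hmem⟩, ?_⟩
    apply yd_ext
    show (addBox D i _).cells = E.cells
    rw [hcells]
    rfl
lemma corner_cell_mem (D : YoungDiagram) {i : ℕ} (h : D.rowLen (i+1) < D.rowLen i) :
    (i, D.rowLen i - 1) ∈ D := by
  rw [mem_iff_lt_rowLen]; omega

lemma mem_lowers {D E : YoungDiagram} :
    E ∈ lowers D ↔ E ≤ D ∧ E.cells.card + 1 = D.cells.card := by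
  constructor
  · rintro hE
    simp only [lowers, Finset.mem_image, Finset.mem_attach, true_and] at hE
    obtain ⟨⟨i, hi⟩, rfl⟩ := hE
    have hcond : D.rowLen (i+1) < D.rowLen i := by
      simp only [cornerRows, Finset.mem_filter] at hi; exact hi.2
    constructor
    · intro c hc
      simp only [delBox, SetLike.mem_coe, YoungDiagram.mem_mk] at hc ⊢
      exact Finset.erase_subset _ _ hc
    · show (D.cells.erase (i, D.rowLen i - 1)).card + 1 = _
      rw [Finset.card_erase_of_mem ((mem_cells _).mpr (corner_cell_mem D hcond))]
      have : 0 < D.cells.card := Finset.card_pos.mpr ⟨_, (mem_cells _).mpr (corner_cell_mem D hcond)⟩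
      omega
  · rintro ⟨hle, hcard⟩
    have hsub : E.cells ⊆ D.cells := cells_subset_iff.mpr hle
    have hsd : (D.cells \ E.cells).card = 1 := by
      rw [Finset.card_sdiff_of_subset hsub]; omega
    obtain ⟨c, hc⟩ := Finset.card_eq_one.mp hsd
    have hcmem : c ∈ D.cells \ E.cells := by rw [hc]; exact Finset.mem_singleton_self c
    obtain ⟨hcD, hcE⟩ := Finset.mem_sdiff.mp hcmem
    have hcells : E.cells = D.cells.erase c := by
      ext x
      rw [Finset.mem_erase]
      constructor
      · intro hx
        exact ⟨fun h => hcE (h ▸ hx), hsub hx⟩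
      · rintro ⟨hne, hx⟩
        by_contra hxE
        have : x ∈ D.cells \ E.cells := Finset.mem_sdiff.mpr ⟨hx, hxE⟩
        rw [hc, Finset.mem_singleton] at this
        exact hne this
    obtain ⟨i, j⟩ := c
    have hup : (i, j+1) ∉ D := by
      intro hmem
      have hE1 : (i, j+1) ∈ E.cells := by
        rw [hcells, Finset.mem_erase]
        exact ⟨by simp, (mem_cells _).mpr hmem⟩
      have : (i, j) ∈ E := E.up_left_mem le_rfl (by omega) ((mem_cells _).mp hE1)
      exact hcE ((mem_cells _).mpr this)
    have hright : (i+1, j) ∉ D := by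
      intro hmem
      have hE1 : (i+1, j) ∈ E.cells := by
        rw [hcells, Finset.mem_erase]
        exact ⟨by simp, (mem_cells _).mpr hmem⟩
      have : (i, j) ∈ E := E.up_left_mem (by omega) le_rfl ((mem_cells _).mp hE1)
      exact hcE ((mem_cells _).mpr this)
    have hjD : j < D.rowLen i := mem_iff_lt_rowLen.mp ((mem_cells _).mp hcD)
    have hj1 : ¬ (j + 1 < D.rowLen i) := fun h => hup (mem_iff_lt_rowLen.mpr h)
    have hrl : D.rowLen i = j + 1 := by omega
    have hr2 : D.rowLen (i+1) ≤ j := by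
      by_contra h
      exact hright (mem_iff_lt_rowLen.mpr (by omega))
    have hcorner : i ∈ cornerRows D := by
      refine Finset.mem_filter.mpr ⟨Finset.mem_range.mpr ?_, by omega⟩
      have : i < D.cells.card := row_lt_card ((mem_cells _).mp hcD)
      omega
    simp only [lowers, Finset.mem_image, Finset.mem_attach, true_and]
    refine ⟨⟨i, hcorner⟩, ?_⟩
    apply yd_ext
    show (delBox D i _).cells = E.cells
    rw [hcells]
    show D.cells.erase (i, D.rowLen i - 1) = _
    rw [hrl]
    simp

lemma mem_lowers_iff_mem_uppers {D E : YoungDiagram} :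
    E ∈ lowers D ↔ D ∈ uppers E := by
  rw [mem_lowers, mem_uppers]
  constructor
  · rintro ⟨h1, h2⟩; exact ⟨h1, h2.symm⟩
  · rintro ⟨h1, h2⟩; exact ⟨h1, h2.symm⟩
lemma addRows_eq (D : YoungDiagram) :
    addRows D = insert 0 ((cornerRows D).image (· + 1)) := by
  ext i
  simp only [addRows, cornerRows, Finset.mem_insert, Finset.mem_image, Finset.mem_filter,
    Finset.mem_range]
  constructor
  · rintro ⟨hr, rfl | hcond⟩
    · left; rfl
    · rcases Nat.eq_zero_or_pos i with rfl | hpos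
      · left; rfl
      · right
        refine ⟨i - 1, ⟨?_, ?_⟩, by omega⟩
        · omega
        · have : i - 1 + 1 = i := by omega
          rw [this]; exact hcond
  · rintro (rfl | ⟨k, ⟨hk, hcond⟩, rfl⟩)
    · exact ⟨by omega, Or.inl rfl⟩
    · refine ⟨?_, Or.inr (by simpa using hcond)⟩
      have : 0 < D.rowLen k := by omega
      have : k < D.cells.card := row_lt_card (rowLen_pos_iff.mp this)
      omega

lemma card_addRows (D : YoungDiagram) : (addRows D).card = (cornerRows D).card + 1 := by
  rw [addRows_eq, Finset.card_insert_of_notMem (by simp), Finset.card_image_of_injective _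
    (fun a b => by omega)]

lemma card_uppers (D : YoungDiagram) : (uppers D).card = (lowers D).card + 1 := by
  have h1 : (uppers D).card = (addRows D).card := by
    rw [uppers, Finset.card_image_of_injective, Finset.card_attach]
    rintro ⟨a, ha⟩ ⟨b, hb⟩ h
    have hc := congrArg YoungDiagram.cells h
    simp only [addBox] at hc
    have hmem : (a, D.rowLen a) ∈ insert (b, D.rowLen b) D.cells := by
      rw [← hc]; exact Finset.mem_insert_self _ _
    rcases Finset.mem_insert.mp hmem with heq | hmem
    · exact Subtype.ext (congrArg Prod.fst heq)
    · exact absurd ((mem_cells _).mp hmem) (addBox_cell_not_mem D a)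
  have h2 : (lowers D).card = (cornerRows D).card := by
    rw [lowers, Finset.card_image_of_injective, Finset.card_attach]
    rintro ⟨a, ha⟩ ⟨b, hb⟩ h
    have hca : D.rowLen (a+1) < D.rowLen a := (Finset.mem_filter.mp ha).2
    have hcb : D.rowLen (b+1) < D.rowLen b := (Finset.mem_filter.mp hb).2
    have hc := congrArg YoungDiagram.cells h
    simp only [delBox] at hc
    refine Subtype.ext ?_
    by_contra hab
    have hmem : (a, D.rowLen a - 1) ∈ D.cells.erase (b, D.rowLen b - 1) := by
      refine Finset.mem_erase.mpr ⟨?_, (mem_cells _).mpr (corner_cell_mem D hca)⟩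
      simp only [Ne, Prod.mk.injEq, not_and]
      intro hh; exact absurd hh hab
    rw [← hc] at hmem
    exact (Finset.mem_erase.mp hmem).1 rfl
  rw [h1, h2, card_addRows]
lemma card_le_of_le {D E : YoungDiagram} (h : D ≤ E) : D.cells.card ≤ E.cells.card :=
  Finset.card_le_card (cells_subset_iff.mpr h)

lemma eq_of_le_of_card_le {D E : YoungDiagram} (h : D ≤ E)
    (hc : E.cells.card ≤ D.cells.card) : D = E :=
  yd_ext (Finset.eq_of_subset_of_card_le (cells_subset_iff.mpr h) hc)

lemma card_inter_uppers {D E : YoungDiagram} (hne : D ≠ E)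
    (hcard : D.cells.card = E.cells.card) :
    (uppers D ∩ uppers E).card = (lowers D ∩ lowers E).card := by
  set n := D.cells.card with hn
  have hsum : (D ⊔ E).cells.card + (D ⊓ E).cells.card = 2 * n := by
    rw [cells_sup, cells_inf, Finset.card_union_add_card_inter]
    omega
  have hsup : n + 1 ≤ (D ⊔ E).cells.card := by
    by_contra h
    push_neg at h
    have h' : (D ⊔ E).cells.card ≤ n := by omega
    have hD : D = D ⊔ E := eq_of_le_of_card_le le_sup_left h'
    have hE : E = D ⊔ E := eq_of_le_of_card_le le_sup_right (by omega)
    exact hne (hD.trans hE.symm)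
  by_cases hs : (D ⊔ E).cells.card = n + 1
  · have hi : (D ⊓ E).cells.card + 1 = n := by omega
    have h1 : uppers D ∩ uppers E = {D ⊔ E} := by
      ext F
      simp only [Finset.mem_inter, mem_uppers, Finset.mem_singleton]
      constructor
      · rintro ⟨⟨hDF, hcF⟩, ⟨hEF, -⟩⟩
        exact ((eq_of_le_of_card_le (sup_le hDF hEF) (by omega)).symm)
      · rintro rfl
        exact ⟨⟨le_sup_left, by omega⟩, ⟨le_sup_right, by omega⟩⟩
    have h2 : lowers D ∩ lowers E = {D ⊓ E} := by
      ext G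
      simp only [Finset.mem_inter, mem_lowers, Finset.mem_singleton]
      constructor
      · rintro ⟨⟨hGD, hcG⟩, ⟨hGE, -⟩⟩
        exact eq_of_le_of_card_le (le_inf hGD hGE) (by omega)
      · rintro rfl
        exact ⟨⟨inf_le_left, by omega⟩, ⟨inf_le_right, by omega⟩⟩
    rw [h1, h2]
    simp
  · have h1 : uppers D ∩ uppers E = ∅ := by
      rw [Finset.eq_empty_iff_forall_notMem]
      intro F hF
      simp only [Finset.mem_inter, mem_uppers] at hF
      obtain ⟨⟨hDF, hcF⟩, ⟨hEF, -⟩⟩ := hF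
      have := card_le_of_le (sup_le hDF hEF)
      omega
    have h2 : lowers D ∩ lowers E = ∅ := by
      rw [Finset.eq_empty_iff_forall_notMem]
      intro G hG
      simp only [Finset.mem_inter, mem_lowers] at hG
      obtain ⟨⟨hGD, hcG⟩, ⟨hGE, -⟩⟩ := hG
      have := card_le_of_le (le_inf hGD hGE)
      omega
    rw [h1, h2]

lemma card_eq_zero_iff {D : YoungDiagram} : D.cells.card = 0 ↔ D = ⊥ := by
  rw [Finset.card_eq_zero]
  constructor
  · intro h; apply yd_ext; rw [h, cells_bot]
  · rintro rfl; exact cells_bot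

lemma lowers_nonempty {D : YoungDiagram} (h : D.cells.card ≠ 0) : (lowers D).Nonempty := by
  have hne : D.cells.Nonempty := Finset.card_pos.mp (by omega)
  obtain ⟨c, hc⟩ := hne
  have h00 : (0, 0) ∈ D := D.up_left_mem (Nat.zero_le _) (Nat.zero_le _) ((mem_cells _).mp hc)
  have hcol : 0 < D.colLen 0 := mem_iff_lt_colLen.mp h00
  set i0 := D.colLen 0 - 1 with hi0
  have hmem : (i0, 0) ∈ D := mem_iff_lt_colLen.mpr (by omega)
  have hr0 : 0 < D.rowLen i0 := rowLen_pos_iff.mpr hmem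
  have hnot : (i0 + 1, 0) ∉ D := fun hm => by
    have := mem_iff_lt_colLen.mp hm; omega
  have hr1 : D.rowLen (i0 + 1) = 0 := by
    by_contra hh
    exact hnot (rowLen_pos_iff.mp (by omega))
  have hcr : i0 ∈ cornerRows D := by
    refine Finset.mem_filter.mpr ⟨Finset.mem_range.mpr ?_, by omega⟩
    have := colLen_le_card D 0
    omega
  exact ⟨delBox D i0 (by omega),
    Finset.mem_image.mpr ⟨⟨i0, hcr⟩, Finset.mem_attach _ _, rfl⟩⟩

noncomputable def levels : ℕ → Finset YoungDiagram
  | 0 => {⊥}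
  | n+1 => (levels n).biUnion uppers

lemma mem_levels {n : ℕ} {D : YoungDiagram} : D ∈ levels n ↔ D.cells.card = n := by
  induction n generalizing D with
  | zero =>
    simp only [levels, Finset.mem_singleton]
    rw [← card_eq_zero_iff]
  | succ n ih =>
    simp only [levels, Finset.mem_biUnion]
    constructor
    · rintro ⟨E, hE, hDE⟩
      rw [(mem_uppers.mp hDE).2, ih.mp hE]
    · intro hD
      obtain ⟨E, hE⟩ := lowers_nonempty (D := D) (by omega)
      obtain ⟨hle, hc⟩ := mem_lowers.mp hE
      exact ⟨E, ih.mpr (by omega), mem_lowers_iff_mem_uppers.mp hE⟩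

noncomputable def fYD (D : YoungDiagram) : ℕ :=
  if D.cells.card = 0 then 1 else ∑ E ∈ (lowers D).attach, fYD E.1
termination_by D.cells.card
decreasing_by
  have := (mem_lowers.mp E.2).2
  omega

lemma fYD_bot : fYD ⊥ = 1 := by rw [fYD]; simp

lemma fYD_spec {D : YoungDiagram} (h : D.cells.card ≠ 0) :
    fYD D = ∑ E ∈ lowers D, fYD E := by
  rw [fYD, if_neg h]
  exact Finset.sum_attach _ _
lemma lowers_subset_levels {D : YoungDiagram} {n : ℕ} (hD : D.cells.card = n + 1) :
    lowers D ⊆ levels n := by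
  intro E hE
  rw [mem_levels]
  have := (mem_lowers.mp hE).2
  omega

lemma uppers_subset_levels {D : YoungDiagram} {n : ℕ} (hD : D.cells.card + 1 = n) :
    uppers D ⊆ levels n := by
  intro E hE
  rw [mem_levels]
  have := (mem_uppers.mp hE).2
  omega

lemma sum_uppers : ∀ (n : ℕ) (D : YoungDiagram), D.cells.card = n →
    ∑ E ∈ uppers D, fYD E = (n + 1) * fYD D := by
  intro n
  induction n using Nat.strong_induction_on with
  | _ n ih =>
    intro D hD
    -- main computation
    have step1 : ∑ E ∈ uppers D, fYD E
        = ∑ π ∈ levels n, (uppers D ∩ uppers π).card * fYD π := by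
      have e1 : ∀ E ∈ uppers D, fYD E = ∑ π ∈ levels n, if π ∈ lowers E then fYD π else 0 := by
        intro E hE
        obtain ⟨-, hcE⟩ := mem_uppers.mp hE
        have hcE' : E.cells.card = n + 1 := by omega
        rw [fYD_spec (by omega), Finset.sum_ite_mem,
          Finset.inter_eq_right.mpr (lowers_subset_levels hcE')]
      rw [Finset.sum_congr rfl e1, Finset.sum_comm]
      refine Finset.sum_congr rfl fun π hπ => ?_
      have : ∀ E ∈ uppers D, (if π ∈ lowers E then fYD π else 0)
          = (if E ∈ uppers π then fYD π else 0) := by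
        intro E hE
        simp only [mem_lowers_iff_mem_uppers]
      rw [Finset.sum_congr rfl this, Finset.sum_ite_mem, Finset.sum_const, smul_eq_mul]
    have step2 : ∑ π ∈ levels n, (uppers D ∩ uppers π).card * fYD π
        = ∑ π ∈ levels n, (lowers D ∩ lowers π).card * fYD π + fYD D := by
      have hDlev : D ∈ levels n := mem_levels.mpr hD
      rw [Finset.sum_eq_sum_sdiff_singleton_add hDlev, Finset.sum_eq_sum_sdiff_singleton_add hDlev
        (fun π => (lowers D ∩ lowers π).card * fYD π)]
      have hdiff : ∀ π ∈ levels n \ {D}, (uppers D ∩ uppers π).card * fYD π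
          = (lowers D ∩ lowers π).card * fYD π := by
        intro π hπ
        obtain ⟨hπl, hπne⟩ := Finset.mem_sdiff.mp hπ
        rw [card_inter_uppers (fun h => (Finset.mem_singleton.mpr h.symm) |> hπne)
          (hD.trans (mem_levels.mp hπl).symm)]
      rw [Finset.sum_congr rfl hdiff, Finset.inter_self, Finset.inter_self, card_uppers]
      ring
    have step3 : ∑ π ∈ levels n, (lowers D ∩ lowers π).card * fYD π = n * fYD D := by
      have e1 : ∀ π ∈ levels n, (lowers D ∩ lowers π).card * fYD π
          = ∑ τ ∈ lowers D, if τ ∈ lowers π then fYD π else 0 := by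
        intro π hπ
        rw [Finset.sum_ite_mem, Finset.sum_const, smul_eq_mul]
      rw [Finset.sum_congr rfl e1, Finset.sum_comm]
      have e2 : ∀ τ ∈ lowers D, ∑ π ∈ levels n, (if τ ∈ lowers π then fYD π else 0)
          = n * fYD τ := by
        intro τ hτ
        obtain ⟨-, hcτ⟩ := mem_lowers.mp hτ
        have e3 : ∀ π ∈ levels n, (if τ ∈ lowers π then fYD π else 0)
            = (if π ∈ uppers τ then fYD π else 0) := by
          intro π hπ
          simp only [mem_lowers_iff_mem_uppers]
        rw [Finset.sum_congr rfl e3, Finset.sum_ite_mem,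
          Finset.inter_eq_right.mpr (uppers_subset_levels (by omega)),
          ih τ.cells.card (by omega) τ rfl]
        congr 1
        omega
      rw [Finset.sum_congr rfl e2, ← Finset.mul_sum]
      rcases Nat.eq_zero_or_pos n with rfl | hn
      · simp
      · rw [← fYD_spec (by omega)]
    rw [step1, step2, step3]
    ring
lemma sum_sq_levels (n : ℕ) : ∑ D ∈ levels n, fYD D ^ 2 = n.factorial := by
  induction n with
  | zero => simp [levels, fYD_bot]
  | succ n ih =>
    have step1 : ∑ D ∈ levels (n+1), fYD D ^ 2
        = ∑ μ ∈ levels n, ∑ D ∈ uppers μ, fYD μ * fYD D := by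
      have e1 : ∀ D ∈ levels (n+1), fYD D ^ 2
          = ∑ μ ∈ levels n, if μ ∈ lowers D then fYD μ * fYD D else 0 := by
        intro D hD
        have hcD : D.cells.card = n + 1 := mem_levels.mp hD
        rw [Finset.sum_ite_mem, Finset.inter_eq_right.mpr (lowers_subset_levels hcD),
          ← Finset.sum_mul, ← fYD_spec (by omega), sq]
      rw [Finset.sum_congr rfl e1, Finset.sum_comm]
      refine Finset.sum_congr rfl fun μ hμ => ?_
      have hcμ : μ.cells.card = n := mem_levels.mp hμ
      have e2 : ∀ D ∈ levels (n+1), (if μ ∈ lowers D then fYD μ * fYD D else 0)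
          = (if D ∈ uppers μ then fYD μ * fYD D else 0) := by
        intro D hD
        simp only [mem_lowers_iff_mem_uppers]
      rw [Finset.sum_congr rfl e2, Finset.sum_ite_mem,
        Finset.inter_eq_right.mpr (uppers_subset_levels (by omega))]
    rw [step1]
    have e3 : ∀ μ ∈ levels n, ∑ D ∈ uppers μ, fYD μ * fYD D = (n+1) * fYD μ ^ 2 := by
      intro μ hμ
      rw [← Finset.mul_sum, sum_uppers n μ (mem_levels.mp hμ), sq]
      ring
    rw [Finset.sum_congr rfl e3, ← Finset.mul_sum, ih, Nat.factorial_succ]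
/-- standard Young tableaux of shape `D` with entries in `Fin n` -/
def SytType (D : YoungDiagram) (n : ℕ) :=
  {T : D.cells → Fin n //
    Function.Bijective T ∧
    (∀ c d : D.cells, c.1.1 = d.1.1 → c.1.2 < d.1.2 → T c < T d) ∧
    (∀ c d : D.cells, c.1.2 = d.1.2 → c.1.1 < d.1.1 → T c < T d)}

instance (D : YoungDiagram) (n : ℕ) : Finite (SytType D n) := by
  unfold SytType; infer_instance

lemma nat_card_sytType_zero {D : YoungDiagram} (h : D.cells.card = 0) :
    Nat.card (SytType D 0) = 1 := by
  have hc : D.cells = ∅ := Finset.card_eq_zero.mp h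
  have hempty : ∀ c : D.cells, False := fun c => by
    have h2 := c.2
    simp only [hc] at h2
    exact Finset.notMem_empty _ h2
  rw [Nat.card_eq_one_iff_unique]
  constructor
  · constructor
    intro T S
    apply Subtype.ext
    funext c
    exact absurd (hempty c) not_false
  · refine ⟨⟨fun c => absurd (hempty c) not_false, ?_, ?_, ?_⟩⟩
    · constructor
      · intro a; exact absurd (hempty a) not_false
      · intro y; exact y.elim0
    · intro c; exact absurd (hempty c) not_false
    · intro c; exact absurd (hempty c) not_false

lemma lowers_missing {D E : YoungDiagram} (hE : E ∈ lowers D) :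
    ∃ c : ℕ × ℕ, c ∈ D.cells ∧ E.cells = D.cells.erase c ∧
      (c.1 + 1, c.2) ∉ D ∧ (c.1, c.2 + 1) ∉ D := by
  simp only [lowers, Finset.mem_image, Finset.mem_attach, true_and] at hE
  obtain ⟨⟨i, hi⟩, rfl⟩ := hE
  have hcond : D.rowLen (i+1) < D.rowLen i := (Finset.mem_filter.mp hi).2
  refine ⟨(i, D.rowLen i - 1), (mem_cells _).mpr (corner_cell_mem D hcond), rfl, ?_, ?_⟩
  · show (i + 1, D.rowLen i - 1) ∉ D
    rw [mem_iff_lt_rowLen]; omega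
  · show (i, D.rowLen i - 1 + 1) ∉ D
    rw [mem_iff_lt_rowLen]; omega

lemma corner_mem_lowers {D : YoungDiagram} {c : ℕ × ℕ} (hc : c ∈ D.cells)
    (h1 : (c.1 + 1, c.2) ∉ D) (h2 : (c.1, c.2 + 1) ∉ D) :
    ∃ E ∈ lowers D, E.cells = D.cells.erase c := by
  have hjD : c.2 < D.rowLen c.1 := mem_iff_lt_rowLen.mp ((mem_cells _).mp hc)
  have hj1 : ¬ (c.2 + 1 < D.rowLen c.1) := fun h => h2 (mem_iff_lt_rowLen.mpr h)
  have hrl : D.rowLen c.1 = c.2 + 1 := by omega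
  have hr2 : D.rowLen (c.1 + 1) ≤ c.2 := by
    by_contra h
    exact h1 (mem_iff_lt_rowLen.mpr (by omega))
  have hcr : c.1 ∈ cornerRows D := by
    refine Finset.mem_filter.mpr ⟨Finset.mem_range.mpr ?_, by omega⟩
    have := row_lt_card ((mem_cells _).mp hc)
    omega
  refine ⟨delBox D c.1 (by omega), Finset.mem_image.mpr ⟨⟨c.1, hcr⟩, Finset.mem_attach _ _, rfl⟩, ?_⟩
  show D.cells.erase (c.1, D.rowLen c.1 - 1) = _
  rw [hrl]
  simp

lemma nat_card_sigma {ι : Type*} [Fintype ι] (β : ι → Type*) [∀ i, Finite (β i)] :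
    Nat.card (Σ i, β i) = ∑ i, Nat.card (β i) := by
  letI : ∀ i, Fintype (β i) := fun i => Fintype.ofFinite _
  simp [Nat.card_eq_fintype_card]
noncomputable def PsiFun (D E : YoungDiagram) (m : ℕ) (T' : SytType E m) :
    D.cells → Fin (m + 1) := fun c =>
  if h : c.1 ∈ E.cells then (T'.1 ⟨c.1, h⟩).castSucc else Fin.last m

lemma PsiFun_eval_mem {D E : YoungDiagram} {m : ℕ} (T' : SytType E m) (c : D.cells)
    (h : c.1 ∈ E.cells) : PsiFun D E m T' c = (T'.1 ⟨c.1, h⟩).castSucc := dif_pos h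

lemma PsiFun_eval_not_mem {D E : YoungDiagram} {m : ℕ} (T' : SytType E m) (c : D.cells)
    (h : c.1 ∉ E.cells) : PsiFun D E m T' c = Fin.last m := dif_neg h

lemma PsiFun_prop {D E : YoungDiagram} {m : ℕ} (hE : E ∈ lowers D)
    (hcard : D.cells.card = m + 1) (T' : SytType E m) :
    Function.Bijective (PsiFun D E m T') ∧
    (∀ c d : D.cells, c.1.1 = d.1.1 → c.1.2 < d.1.2 → PsiFun D E m T' c < PsiFun D E m T' d) ∧
    (∀ c d : D.cells, c.1.2 = d.1.2 → c.1.1 < d.1.1 → PsiFun D E m T' c < PsiFun D E m T' d) := by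
  obtain ⟨c₀, hc₀D, hc₀cells, hcorner1, hcorner2⟩ := lowers_missing hE
  have hmiss : ∀ x ∈ D.cells, x ∉ E.cells → x = c₀ := by
    intro x hx hxe
    by_contra hne
    exact hxe (by rw [hc₀cells]; exact Finset.mem_erase.mpr ⟨hne, hx⟩)
  have hinj : Function.Injective (PsiFun D E m T') := by
    intro a b hab
    by_cases ha : a.1 ∈ E.cells <;> by_cases hb : b.1 ∈ E.cells
    · rw [PsiFun_eval_mem T' a ha, PsiFun_eval_mem T' b hb] at hab
      have h1 := T'.2.1.1 (Fin.castSucc_injective m hab)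
      have h2 : a.1 = b.1 := congrArg (fun x : {x // x ∈ E.cells} => x.1) h1
      exact Subtype.ext h2
    · rw [PsiFun_eval_mem T' a ha, PsiFun_eval_not_mem T' b hb] at hab
      exact absurd hab (ne_of_lt (Fin.castSucc_lt_last _))
    · rw [PsiFun_eval_not_mem T' a ha, PsiFun_eval_mem T' b hb] at hab
      exact absurd hab.symm (ne_of_lt (Fin.castSucc_lt_last _))
    · exact Subtype.ext ((hmiss _ a.2 ha).trans (hmiss _ b.2 hb).symm)
  refine ⟨(Fintype.bijective_iff_injective_and_card _).mpr ⟨hinj, by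
    simp [Fintype.card_coe, hcard]⟩, ?_, ?_⟩
  · intro c d h1 h2
    by_cases hd : d.1 ∈ E.cells
    · have hcE : c.1 ∈ E.cells := by
        by_contra hcE
        have hceq : c.1 = c₀ := hmiss _ c.2 hcE
        have hd' : (d.1.1, d.1.2) ∈ D := by simpa using (mem_cells _).mp d.2
        have hmem : (c.1.1, c.1.2 + 1) ∈ D := D.up_left_mem (le_of_eq h1) (by omega) hd'
        rw [hceq] at hmem
        exact hcorner2 hmem
      rw [PsiFun_eval_mem T' c hcE, PsiFun_eval_mem T' d hd]
      rw [Fin.castSucc_lt_castSucc_iff]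
      exact T'.2.2.1 ⟨c.1, hcE⟩ ⟨d.1, hd⟩ h1 h2
    · have hcE : c.1 ∈ E.cells := by
        by_contra hcE
        have h3 := hmiss _ c.2 hcE
        have h4 := hmiss _ d.2 hd
        rw [← h4] at h3
        rw [h3] at h2
        omega
      rw [PsiFun_eval_mem T' c hcE, PsiFun_eval_not_mem T' d hd]
      exact Fin.castSucc_lt_last _
  · intro c d h1 h2
    by_cases hd : d.1 ∈ E.cells
    · have hcE : c.1 ∈ E.cells := by
        by_contra hcE
        have hceq : c.1 = c₀ := hmiss _ c.2 hcE
        have hd' : (d.1.1, d.1.2) ∈ D := by simpa using (mem_cells _).mp d.2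
        have hmem : (c.1.1 + 1, c.1.2) ∈ D := D.up_left_mem (by omega) (le_of_eq h1) hd'
        rw [hceq] at hmem
        exact hcorner1 hmem
      rw [PsiFun_eval_mem T' c hcE, PsiFun_eval_mem T' d hd]
      rw [Fin.castSucc_lt_castSucc_iff]
      exact T'.2.2.2 ⟨c.1, hcE⟩ ⟨d.1, hd⟩ h1 h2
    · have hcE : c.1 ∈ E.cells := by
        by_contra hcE
        have h3 := hmiss _ c.2 hcE
        have h4 := hmiss _ d.2 hd
        rw [← h4] at h3
        rw [h3] at h2
        omega
      rw [PsiFun_eval_mem T' c hcE, PsiFun_eval_not_mem T' d hd]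
      exact Fin.castSucc_lt_last _
lemma nat_card_sytType_succ {D : YoungDiagram} {m : ℕ} (hcard : D.cells.card = m + 1) :
    Nat.card (SytType D (m + 1)) = ∑ E ∈ lowers D, Nat.card (SytType E m) := by
  classical
  let Ψ : (Σ E : {E // E ∈ lowers D}, SytType E.1 m) → SytType D (m + 1) :=
    fun p => ⟨PsiFun D p.1.1 m p.2, PsiFun_prop p.1.2 hcard p.2⟩
  have hchar : ∀ (G : YoungDiagram) (S : SytType G m) (c : D.cells),
      PsiFun D G m S c ≠ Fin.last m ↔ c.1 ∈ G.cells := by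
    intro G S c
    by_cases h : c.1 ∈ G.cells
    · rw [PsiFun_eval_mem S c h]
      exact ⟨fun _ => h, fun _ => ne_of_lt (Fin.castSucc_lt_last _)⟩
    · rw [PsiFun_eval_not_mem S c h]
      exact ⟨fun hh => absurd rfl hh, fun hh => absurd hh h⟩
  have hbij : Function.Bijective Ψ := by
    constructor
    · rintro ⟨⟨E, hEl⟩, T'⟩ ⟨⟨F, hFl⟩, S'⟩ h
      have hfun : PsiFun D E m T' = PsiFun D F m S' := congrArg Subtype.val h
      have hEsub : E.cells ⊆ D.cells := cells_subset_iff.mpr (mem_lowers.mp hEl).1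
      have hFsub : F.cells ⊆ D.cells := cells_subset_iff.mpr (mem_lowers.mp hFl).1
      have hEF : E = F := by
        apply yd_ext
        ext x
        constructor
        · intro hx
          have hxD : x ∈ D.cells := hEsub hx
          have h2 := (hchar E T' ⟨x, hxD⟩).mpr hx
          rw [hfun] at h2
          exact (hchar F S' ⟨x, hxD⟩).mp h2
        · intro hx
          have hxD : x ∈ D.cells := hFsub hx
          have h2 := (hchar F S' ⟨x, hxD⟩).mpr hx
          rw [← hfun] at h2
          exact (hchar E T' ⟨x, hxD⟩).mp h2
      subst hEF
      have hT : T' = S' := by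
        apply Subtype.ext
        funext c
        have hxD : c.1 ∈ D.cells := hEsub c.2
        have h1 := congrFun hfun ⟨c.1, hxD⟩
        rw [PsiFun_eval_mem T' ⟨c.1, hxD⟩ c.2, PsiFun_eval_mem S' ⟨c.1, hxD⟩ c.2] at h1
        have h2 := Fin.castSucc_injective m h1
        rw [Subtype.coe_eta] at h2
        exact h2
      rw [hT]
    · intro T
      obtain ⟨c₀, hc₀⟩ := T.2.1.2 (Fin.last m)
      -- c₀ is a corner
      have hcorner1 : (c₀.1.1 + 1, c₀.1.2) ∉ D := by
        intro hm
        have hlt := T.2.2.2 c₀ ⟨(c₀.1.1 + 1, c₀.1.2), (mem_cells _).mpr hm⟩ rfl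
          (by show c₀.1.1 < c₀.1.1 + 1; omega)
        rw [hc₀] at hlt
        exact absurd hlt (not_lt.mpr (Fin.le_last _))
      have hcorner2 : (c₀.1.1, c₀.1.2 + 1) ∉ D := by
        intro hm
        have hlt := T.2.2.1 c₀ ⟨(c₀.1.1, c₀.1.2 + 1), (mem_cells _).mpr hm⟩ rfl
          (by show c₀.1.2 < c₀.1.2 + 1; omega)
        rw [hc₀] at hlt
        exact absurd hlt (not_lt.mpr (Fin.le_last _))
      have hc₀p : (c₀.1.1, c₀.1.2) ∈ D.cells := by simpa using c₀.2
      obtain ⟨E, hElow, hEcells⟩ := corner_mem_lowers hc₀p hcorner1 hcorner2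
      have hEsub : E.cells ⊆ D.cells := by rw [hEcells]; exact Finset.erase_subset _ _
      have hcE : E.cells.card = m := by
        rw [hEcells, Finset.card_erase_of_mem hc₀p]
        omega
      -- values of T on E-cells are < m
      have hval : ∀ (c : E.cells), ((T.1 ⟨c.1, hEsub c.2⟩ : Fin (m+1)) : ℕ) < m := by
        intro c
        have hne : (⟨c.1, hEsub c.2⟩ : D.cells) ≠ c₀ := by
          intro hh
          have h5 : c.1 = c₀.1 := congrArg (fun x : {x // x ∈ D.cells} => x.1) hh
          have h6 : c.1 ∈ D.cells.erase (c₀.1.1, c₀.1.2) := hEcells ▸ c.2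
          rw [Finset.mem_erase] at h6
          exact h6.1 (by rw [h5])
        have hne2 : T.1 ⟨c.1, hEsub c.2⟩ ≠ Fin.last m := by
          intro hh
          exact hne (T.2.1.1 (hh.trans hc₀.symm))
        have := (T.1 ⟨c.1, hEsub c.2⟩).isLt
        have hvne : ((T.1 ⟨c.1, hEsub c.2⟩ : Fin (m+1)) : ℕ) ≠ m := by
          intro hh
          exact hne2 (Fin.ext hh)
        omega
      let T' : SytType E m := ⟨fun c => ⟨(T.1 ⟨c.1, hEsub c.2⟩ : Fin (m+1)), hval c⟩, by
        have hinj : Function.Injective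
            (fun c : E.cells => (⟨(T.1 ⟨c.1, hEsub c.2⟩ : Fin (m+1)), hval c⟩ : Fin m)) := by
          intro a b hab
          simp only [Fin.mk.injEq] at hab
          have := T.2.1.1 (Fin.ext hab)
          have h2 : a.1 = b.1 := congrArg (fun x : {x // x ∈ D.cells} => x.1) this
          exact Subtype.ext h2
        refine ⟨(Fintype.bijective_iff_injective_and_card _).mpr ⟨hinj, by
          simp [Fintype.card_coe, hcE]⟩, ?_, ?_⟩
        · intro c d h1 h2
          have h3 := T.2.2.1 ⟨c.1, hEsub c.2⟩ ⟨d.1, hEsub d.2⟩ h1 h2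
          exact Fin.mk_lt_mk.mpr (Fin.lt_def.mp h3)
        · intro c d h1 h2
          have h3 := T.2.2.2 ⟨c.1, hEsub c.2⟩ ⟨d.1, hEsub d.2⟩ h1 h2
          exact Fin.mk_lt_mk.mpr (Fin.lt_def.mp h3)⟩
      refine ⟨⟨⟨E, hElow⟩, T'⟩, ?_⟩
      apply Subtype.ext
      funext c
      show PsiFun D E m T' c = T.1 c
      by_cases h : c.1 ∈ E.cells
      · rw [PsiFun_eval_mem T' c h]
        apply Fin.ext
        show ((T.1 ⟨c.1, hEsub h⟩ : Fin (m+1)) : ℕ) = ((T.1 c : Fin (m+1)) : ℕ)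
        rw [Subtype.coe_eta]
      · rw [PsiFun_eval_not_mem T' c h]
        have hc : c.1 = (c₀.1.1, c₀.1.2) := by
          by_contra hne
          exact h (hEcells ▸ Finset.mem_erase.mpr ⟨hne, c.2⟩)
        have hcc : c = c₀ := by
          apply Subtype.ext
          rw [hc]
        rw [hcc, hc₀]
  rw [← Nat.card_eq_of_bijective Ψ hbij, nat_card_sigma, ← Finset.sum_coe_sort (lowers D)]
lemma nat_card_sytType_eq_fYD : ∀ (n : ℕ) (D : YoungDiagram), D.cells.card = n →
    Nat.card (SytType D n) = fYD D := by
  intro n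
  induction n with
  | zero =>
    intro D hD
    rw [nat_card_sytType_zero hD, fYD, if_pos hD]
  | succ m ih =>
    intro D hD
    rw [nat_card_sytType_succ hD, fYD_spec (by omega)]
    refine Finset.sum_congr rfl fun E hE => ?_
    have h2 := (mem_lowers.mp hE).2
    exact ih E (by omega)

end SytAux

namespace SytAux
open YoungDiagram

variable {n : ℕ}

lemma part_le (p : Nat.Partition n) {a : ℕ} (ha : a ∈ p.parts) : a ≤ n := by
  obtain ⟨t, ht⟩ := Multiset.exists_cons_of_mem ha
  have hs := p.parts_sum
  rw [ht, Multiset.sum_cons] at hs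
  omega

lemma parts_card_le (p : Nat.Partition n) : Multiset.card p.parts ≤ n := by
  have h := Multiset.card_nsmul_le_sum (s := p.parts) (a := 1)
    (fun x hx => p.parts_pos hx)
  rw [p.parts_sum] at h
  simpa using h

lemma colLen_le (p : Nat.Partition n) (j : ℕ) :
    Multiset.card (p.parts.filter fun a => j < a) ≤ n :=
  le_trans (Multiset.card_le_card (Multiset.filter_le _ _)) (parts_card_le p)

lemma mem_cellsOf (p : Nat.Partition n) {c : ℕ × ℕ} :
    c ∈ cellsOf p ↔ c.1 < Multiset.card (p.parts.filter fun a => c.2 < a) := by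
  rw [cellsOf, Finset.mem_filter]
  constructor
  · rintro ⟨-, h⟩; exact h
  · intro h
    refine ⟨Finset.mem_product.mpr ⟨Finset.mem_range.mpr ?_, Finset.mem_range.mpr ?_⟩, h⟩
    · exact lt_of_lt_of_le h (colLen_le p c.2)
    · have hpos : 0 < Multiset.card (p.parts.filter fun a => c.2 < a) := by omega
      rw [Multiset.card_pos_iff_exists_mem] at hpos
      obtain ⟨a, ha⟩ := hpos
      rw [Multiset.mem_filter] at ha
      exact lt_of_lt_of_le ha.2 (part_le p ha.1)

lemma colLen_anti (p : Nat.Partition n) {j1 j2 : ℕ} (h : j1 ≤ j2) :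
    Multiset.card (p.parts.filter fun a => j2 < a)
      ≤ Multiset.card (p.parts.filter fun a => j1 < a) :=
  Multiset.card_le_card (Multiset.monotone_filter_right _ (fun a (ha : j2 < a) => by omega))

/-- the Young diagram of a partition -/
def ydOf (p : Nat.Partition n) : YoungDiagram where
  cells := cellsOf p
  isLowerSet := by
    rintro ⟨y1, y2⟩ ⟨x1, x2⟩ ⟨hx1 : x1 ≤ y1, hx2 : x2 ≤ y2⟩ hy
    rw [Finset.mem_coe, mem_cellsOf] at hy ⊢
    exact lt_of_le_of_lt hx1 (lt_of_lt_of_le hy (colLen_anti p hx2))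

lemma card_cellsOf (p : Nat.Partition n) : (cellsOf p).card = n := by
  have key : ∀ s : Multiset ℕ, (∀ a ∈ s, a ≤ n) →
      (∑ j ∈ Finset.range n, Multiset.card (s.filter fun a => j < a)) = s.sum := by
    intro s
    induction s using Multiset.induction with
    | empty => simp
    | cons a t ih =>
      intro h
      have ha : a ≤ n := h a (Multiset.mem_cons_self _ _)
      have ht : ∀ x ∈ t, x ≤ n := fun x hx => h x (Multiset.mem_cons_of_mem hx)
      have e1 : ∀ j, Multiset.card ((a ::ₘ t).filter fun x => j < x)
          = (if j < a then 1 else 0) + Multiset.card (t.filter fun x => j < x) := by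
        intro j
        rw [Multiset.filter_cons, Multiset.card_add]
        congr 1
        split <;> simp
      simp only [e1]
      rw [Finset.sum_add_distrib, ih ht, Multiset.sum_cons]
      congr 1
      rw [← Finset.sum_filter]
      have : (Finset.range n).filter (fun j => j < a) = Finset.range a := by
        ext j
        simp only [Finset.mem_filter, Finset.mem_range]
        omega
      rw [this]
      simp
  have h2 : (cellsOf p).card
      = ∑ c ∈ Finset.range n ×ˢ Finset.range n,
          if c.1 < Multiset.card (p.parts.filter fun a => c.2 < a) then 1 else 0 := by
    rw [cellsOf, Finset.card_filter]
  rw [h2, Finset.sum_product]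
  have h3 : ∀ j ∈ Finset.range n, (∑ i ∈ Finset.range n,
      if i < Multiset.card (p.parts.filter fun a => j < a) then 1 else 0)
      = Multiset.card (p.parts.filter fun a => j < a) := by
    intro j hj
    rw [← Finset.sum_filter]
    have : (Finset.range n).filter
        (fun i => i < Multiset.card (p.parts.filter fun a => j < a))
        = Finset.range (Multiset.card (p.parts.filter fun a => j < a)) := by
      ext i
      simp only [Finset.mem_filter, Finset.mem_range]
      have := colLen_le p j
      omega
    rw [this]
    simp
  rw [Finset.sum_comm, Finset.sum_congr rfl h3, key p.parts (fun a ha => part_le p ha),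
    p.parts_sum]

end SytAux

/-- For any partition `p` of `n`, `(f^p)² ≤ n!`. -/
theorem syt_squared_le_factorial (n : ℕ) (p : Nat.Partition n) :
    sytCount p ^ 2 ≤ n.factorial := by
  have h1 : sytCount p = SytAux.fYD (SytAux.ydOf p) := by
    rw [show sytCount p = Nat.card (SytAux.SytType (SytAux.ydOf p) n) from rfl]
    exact SytAux.nat_card_sytType_eq_fYD n _ (SytAux.card_cellsOf p)
  rw [h1]
  rw [← SytAux.sum_sq_levels n]
  refine Finset.single_le_sum (f := fun D => SytAux.fYD D ^ 2) (fun D _ => Nat.zero_le _) ?_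
  exact SytAux.mem_levels.mpr (SytAux.card_cellsOf p)
end
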